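/- arXiv:2207.05516 — 7 statements merged into one kernel-verified Lean document; each statement's English description precedes it below -/
import Mathlib

section
/- Let γ be a type, let x, y : ℕ → γ be sequences, let X, Y be positive integers such that x is X-periodic (x_{k+X} = x_k for all k) and y is Y-periodic (y_{k+Y} = y_k for all k), and let z = gcd(X, Y). Then the multiset of pairs { (x_k, y_k) : k = 1, …, X·Y/z } equals the multiset { (x_i, y_j) : 1 ≤ i ≤ X, 1 ≤ j ≤ Y, i ≡ j (mod z) }; in particular each pairing of an element of one period of x with an element of one period of y whose indices lie in the same residue class modulo z occurs exactly once. -/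
lemma per_mod {γ : Type*} (x : ℕ → γ) (X : ℕ) (hX : 0 < X)
    (hx : ∀ k, x (k + X) = x k) (a : ℕ) : x a = x (a % X) := by
  induction a using Nat.strong_induction_on with
  | _ a ih =>
    rcases lt_or_ge a X with h | h
    · rw [Nat.mod_eq_of_lt h]
    · have h2 : a - X + X = a := Nat.sub_add_cancel h
      rw [← h2, hx, Nat.add_mod_right, ih (a - X) (by omega)]

/-- Lemma 2: for an `X`-periodic sequence `x` and a `Y`-periodic sequence `y`,
over `X·Y/gcd(X,Y)` consecutive steps, the multiset of pairs `(x_k, y_k)` equals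
the multiset of all pairings `(x_i, y_j)` with `1 ≤ i ≤ X`, `1 ≤ j ≤ Y` whose
indices lie in the same residue class modulo `gcd(X,Y)`. -/
theorem stmt1 {γ : Type*} (x y : ℕ → γ) (X Y : ℕ) (hX : 0 < X) (hY : 0 < Y)
    (hx : ∀ k, x (k + X) = x k) (hy : ∀ k, y (k + Y) = y k) :
    (Finset.Icc 1 (X * Y / Nat.gcd X Y)).val.map (fun k => (x k, y k)) =
      (((Finset.Icc 1 X) ×ˢ (Finset.Icc 1 Y)).filter
        (fun p => p.1 % Nat.gcd X Y = p.2 % Nat.gcd X Y)).val.map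
        (fun p => (x p.1, y p.2)) := by
  set g := Nat.gcd X Y with hg
  have hL : X * Y / g = Nat.lcm X Y := rfl
  set L := Nat.lcm X Y with hLdef
  have hLpos : 0 < L := Nat.lcm_pos hX hY
  have hXL : X ∣ L := Nat.dvd_lcm_left X Y
  have hYL : Y ∣ L := Nat.dvd_lcm_right X Y
  have hgX : g ∣ X := Nat.gcd_dvd_left X Y
  have hgY : g ∣ Y := Nat.gcd_dvd_right X Y
  set f : ℕ → ℕ × ℕ := fun k => ((k-1) % X + 1, (k-1) % Y + 1) with hf
  set S := ((Finset.Icc 1 X) ×ˢ (Finset.Icc 1 Y)).filter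
      (fun p => p.1 % g = p.2 % g) with hS
  have hinj : Set.InjOn f (Finset.Icc 1 L) := by
    intro a ha b hb hab
    simp only [Finset.coe_Icc, Set.mem_Icc] at ha hb
    simp only [hf, Prod.mk.injEq] at hab
    have h1 : (a - 1) % X = (b - 1) % X := by omega
    have h2 : (a - 1) % Y = (b - 1) % Y := by omega
    have hX' : Nat.ModEq X (a-1) (b-1) := h1
    have hY' : Nat.ModEq Y (a-1) (b-1) := h2
    have hl : Nat.ModEq L (a-1) (b-1) := by
      rcases le_total (a-1) (b-1) with h | h
      · have := Nat.lcm_dvd ((Nat.modEq_iff_dvd' h).mp hX') ((Nat.modEq_iff_dvd' h).mp hY')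
        exact ((Nat.modEq_iff_dvd' h).mpr this)
      · have := Nat.lcm_dvd ((Nat.modEq_iff_dvd' h).mp hX'.symm) ((Nat.modEq_iff_dvd' h).mp hY'.symm)
        exact ((Nat.modEq_iff_dvd' h).mpr this).symm
    have h3 : (a-1) % L = (b-1) % L := hl
    rw [Nat.mod_eq_of_lt (by omega), Nat.mod_eq_of_lt (by omega)] at h3
    omega
  have himg : Finset.image f (Finset.Icc 1 L) = S := by
    ext p
    simp only [Finset.mem_image, Finset.mem_Icc, hS, Finset.mem_filter,
      Finset.mem_product, hf]
    constructor
    · rintro ⟨k, ⟨hk1, hk2⟩, rfl⟩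
      refine ⟨⟨⟨by omega, by have := Nat.mod_lt (k-1) hX; omega⟩,
        ⟨by omega, by have := Nat.mod_lt (k-1) hY; omega⟩⟩, ?_⟩
      simp only
      have e1 : (k-1) % X % g = (k-1) % g := Nat.mod_mod_of_dvd _ hgX
      have e2 : (k-1) % Y % g = (k-1) % g := Nat.mod_mod_of_dvd _ hgY
      conv_lhs => rw [Nat.add_mod, e1]
      conv_rhs => rw [Nat.add_mod, e2]
    · rintro ⟨⟨⟨hi1, hi2⟩, ⟨hj1, hj2⟩⟩, hmod⟩
      have hcong : Nat.ModEq g (p.1 - 1) (p.2 - 1) := by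
        refine Nat.ModEq.add_right_cancel' 1 ?_
        rw [Nat.sub_add_cancel hi1, Nat.sub_add_cancel hj1]
        exact hmod
      obtain ⟨k0, hk0X, hk0Y⟩ := Nat.chineseRemainder' hcong
      refine ⟨k0 % L + 1, ⟨by omega, by have := Nat.mod_lt k0 hLpos; omega⟩, ?_⟩
      have eX : (k0 % L) % X = k0 % X := Nat.mod_mod_of_dvd k0 hXL
      have eY : (k0 % L) % Y = k0 % Y := Nat.mod_mod_of_dvd k0 hYL
      have hx1 : k0 % X = p.1 - 1 := by
        have h := hk0X; unfold Nat.ModEq at h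
        rw [h, Nat.mod_eq_of_lt (by omega)]
      have hy1 : k0 % Y = p.2 - 1 := by
        have h := hk0Y; unfold Nat.ModEq at h
        rw [h, Nat.mod_eq_of_lt (by omega)]
      have : k0 % L + 1 - 1 = k0 % L := by omega
      rw [this]
      ext <;> simp <;> omega
  have hmapval : (Finset.Icc 1 L).val.map f = S.val := by
    rw [← himg, Finset.image_val_of_injOn hinj]
  have hcongr : (Finset.Icc 1 L).val.map (fun k => (x k, y k))
      = (Finset.Icc 1 L).val.map ((fun p : ℕ × ℕ => (x p.1, y p.2)) ∘ f) := by
    apply Multiset.map_congr rfl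
    intro k hk
    simp only [Finset.mem_val, Finset.mem_Icc] at hk
    have ex : x k = x ((k-1) % X + 1) := by
      have := per_mod (fun n => x (n+1)) X hX
        (fun n => by show x (n + X + 1) = x (n+1); rw [Nat.add_right_comm]; exact hx (n+1)) (k-1)
      simpa [Nat.sub_add_cancel hk.1] using this
    have ey : y k = y ((k-1) % Y + 1) := by
      have := per_mod (fun n => y (n+1)) Y hY
        (fun n => by show y (n + Y + 1) = y (n+1); rw [Nat.add_right_comm]; exact hy (n+1)) (k-1)
      simpa [Nat.sub_add_cancel hk.1] using this
    simp [hf, Function.comp, ← ex, ← ey]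
  rw [hL, hcongr, ← Multiset.map_map, hmapval]
end

section
/- In the basic model, over a·B·N consecutive steps the Age-of-Information sequence generates the following distribution of values: the multiset { α_k : k = 1, …, aBN } equals the multiset union over i = 0, …, a−1 and j = 0, …, N−1 of the arithmetic progressions { c_{ij} + m·a·b : m = 0, 1, …, B−1 }. -/
/-- The Age-of-Information sequence of the basic model:
`α_k = (k·A' % N') + ((k·A' % B' − k·A' % N') % B')`. -/
def aoiBasic (A' B' N' : ℤ) (k : ℕ) : ℤ :=
  ((k : ℤ) * A') % N' + (((k : ℤ) * A') % B' - ((k : ℤ) * A') % N') % B'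

/-- The starting points `c_{ij}` of Theorem 1. -/
def cBasic (A' a b n : ℕ) (i j : ℕ) : ℤ :=
  ((i : ℤ) * A') % ((a : ℤ) * b) +
    ((a : ℤ) * b) *
      ⌈((((i : ℤ) * A') % ((a : ℤ) * n) - ((i : ℤ) * A') % ((a : ℤ) * b)
          + (j : ℤ) * a * n : ℤ) : ℚ) / ((a : ℚ) * b)⌉

namespace AoI5

lemma ceil_bd (D e : ℤ) (he : 0 < e) :
    D ≤ e * ⌈(D:ℚ)/(e:ℚ)⌉ ∧ e * ⌈(D:ℚ)/(e:ℚ)⌉ < D + e := by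
  have he' : (0:ℚ) < (e:ℚ) := by exact_mod_cast he
  constructor
  · have h := Int.le_ceil ((D:ℚ)/(e:ℚ))
    have h2 : (D:ℚ) ≤ (e:ℚ) * (⌈(D:ℚ)/(e:ℚ)⌉ : ℚ) := by
      rw [mul_comm]
      exact (div_le_iff₀ he').mp h
    exact_mod_cast h2
  · have h := Int.ceil_lt_add_one ((D:ℚ)/(e:ℚ))
    have h2 : (e:ℚ) * (⌈(D:ℚ)/(e:ℚ)⌉ : ℚ) < (D:ℚ) + (e:ℚ) := by
      have h3 : (e:ℚ) * (⌈(D:ℚ)/(e:ℚ)⌉ : ℚ) < (e:ℚ) * ((D:ℚ)/(e:ℚ) + 1) :=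
        (mul_lt_mul_iff_right₀ he').mpr h
      calc (e:ℚ) * (⌈(D:ℚ)/(e:ℚ)⌉ : ℚ) < (e:ℚ) * ((D:ℚ)/(e:ℚ) + 1) := h3
        _ = (D:ℚ) + (e:ℚ) := by field_simp
    exact_mod_cast h2

def uX (A N a b n : ℕ) (k : ℕ) : ℤ := ((k:ℤ) * ((A:ℤ)*b*n)) % ((N:ℤ)*a*n)
def jX (A N a b n k : ℕ) : ℕ := (uX A N a b n k / ((a:ℤ)*n)).toNat
def mX (A B N a b n k : ℕ) : ℕ :=
  ((aoiBasic ((A:ℤ)*b*n) ((B:ℤ)*a*b) ((N:ℤ)*a*n) k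
    - cBasic (A*b*n) a b n (k % a) (jX A N a b n k)) / ((a:ℤ)*b)).toNat

lemma keyX (A B N a b n : ℕ) (hA:0<A) (hB:0<B) (hN:0<N)
    (hapos:0<a) (hbpos:0<b) (hnpos:0<n) (k : ℕ) :
    jX A N a b n k < N ∧
    mX A B N a b n k < B ∧
    aoiBasic ((A:ℤ)*b*n) ((B:ℤ)*a*b) ((N:ℤ)*a*n) k
      = cBasic (A*b*n) a b n (k % a) (jX A N a b n k) + (mX A B N a b n k : ℤ) * ((a:ℤ)*b) ∧
    uX A N a b n k = (jX A N a b n k : ℤ) * ((a:ℤ)*n)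
        + (((k % a : ℕ):ℤ) * ((A:ℤ)*b*n)) % ((a:ℤ)*n) ∧
    ((k:ℤ) * ((A:ℤ)*b*n)) % ((B:ℤ)*a*b)
      = aoiBasic ((A:ℤ)*b*n) ((B:ℤ)*a*b) ((N:ℤ)*a*n) k % ((B:ℤ)*a*b) := by
  have hai : (0:ℤ) < a := by exact_mod_cast hapos
  have hbi : (0:ℤ) < b := by exact_mod_cast hbpos
  have hni : (0:ℤ) < n := by exact_mod_cast hnpos
  have hBi : (0:ℤ) < B := by exact_mod_cast hB
  have hNi : (0:ℤ) < N := by exact_mod_cast hN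
  have hab : (0:ℤ) < (a:ℤ)*b := mul_pos hai hbi
  have han : (0:ℤ) < (a:ℤ)*n := mul_pos hai hni
  have hB'p : (0:ℤ) < (B:ℤ)*a*b := by positivity
  have hN'p : (0:ℤ) < (N:ℤ)*a*n := by positivity
  have hanN : ((a:ℤ)*n) ∣ ((N:ℤ)*a*n) := ⟨N, by ring⟩
  have habB : ((a:ℤ)*b) ∣ ((B:ℤ)*a*b) := ⟨B, by ring⟩
  -- congruences mod an and ab for x vs i*A'
  have hdecomp : (k:ℤ) = (a:ℤ) * (k/a : ℕ) + ((k % a : ℕ):ℤ) := by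
    exact_mod_cast (Nat.div_add_mod k a).symm
  have hxan : ((k:ℤ) * ((A:ℤ)*b*n)) % ((a:ℤ)*n)
      = (((k % a : ℕ):ℤ)*((A:ℤ)*b*n)) % ((a:ℤ)*n) := by
    refine Int.modEq_iff_dvd.mpr ⟨-((k/a : ℕ) * A * b), ?_⟩
    rw [hdecomp]; push_cast; ring
  have hxab : ((k:ℤ) * ((A:ℤ)*b*n)) % ((a:ℤ)*b)
      = (((k % a : ℕ):ℤ)*((A:ℤ)*b*n)) % ((a:ℤ)*b) := by
    refine Int.modEq_iff_dvd.mpr ⟨-((k/a : ℕ) * A * n), ?_⟩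
    rw [hdecomp]; push_cast; ring
  have hAA : ((A*b*n : ℕ):ℤ) = (A:ℤ)*b*n := by push_cast; ring
  simp only [mX, jX, uX, aoiBasic, cBasic, hAA]
  set x : ℤ := (k:ℤ) * ((A:ℤ)*b*n) with hx_def
  set u : ℤ := x % ((N:ℤ)*a*n) with hu_def
  set jz : ℤ := u / ((a:ℤ)*n) with hjz_def
  set j : ℕ := jz.toNat with hj_def
  set i : ℕ := k % a with hi_def
  set P : ℤ := (i:ℤ) * ((A:ℤ)*b*n) % ((a:ℤ)*b) with hP_def
  set Q : ℤ := (i:ℤ) * ((A:ℤ)*b*n) % ((a:ℤ)*n) with hQ_def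
  obtain ⟨hD1, hD2⟩ := ceil_bd (Q - P + (j:ℤ)*a*n) ((a:ℤ)*b) hab
  have hcastq : ((((a:ℤ)*(b:ℤ)) : ℤ):ℚ) = ((a:ℕ):ℚ)*((b:ℕ):ℚ) := by push_cast; ring
  rw [hcastq] at hD1 hD2
  set E : ℤ := ⌈((Q - P + (j:ℤ)*a*n : ℤ):ℚ) / (((a:ℕ):ℚ)*((b:ℕ):ℚ))⌉ with hE_def
  set c : ℤ := P + (a:ℤ)*b*E with hc_def
  set w : ℤ := (x % ((B:ℤ)*a*b) - u) % ((B:ℤ)*a*b) with hw_def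
  set mz : ℤ := (u + w - c)/((a:ℤ)*b) with hmz_def
  set m : ℕ := mz.toNat with hm_def
  -- facts about u, j
  have hu0 : 0 ≤ u := Int.emod_nonneg x (ne_of_gt hN'p)
  have huN : u < (N:ℤ)*a*n := Int.emod_lt_of_pos x hN'p
  have huan : u % ((a:ℤ)*n) = Q := by
    rw [hu_def, Int.emod_emod_of_dvd x hanN, hxan]
  have hjz0 : 0 ≤ jz := Int.ediv_nonneg hu0 han.le
  have hjzN : jz < (N:ℤ) := by
    rw [hjz_def]
    exact (Int.ediv_lt_iff_lt_mul han).mpr (by rw [← mul_assoc]; exact huN)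
  have hjcast : (j:ℤ) = jz := Int.toNat_of_nonneg hjz0
  have key2 : j < N := by exact_mod_cast hjcast ▸ hjzN
  have key4 : u = (j:ℤ) * ((a:ℤ)*n) + Q := by
    have h := Int.mul_ediv_add_emod u ((a:ℤ)*n)
    rw [← hjz_def, huan] at h
    rw [hjcast]
    linarith [h, mul_comm ((a:ℤ)*(n:ℤ)) jz]
  -- facts about w
  have hw0 : 0 ≤ w := Int.emod_nonneg _ (ne_of_gt hB'p)
  have hwB : w < (B:ℤ)*a*b := Int.emod_lt_of_pos _ hB'p
  have key5 : (u + w) % ((B:ℤ)*a*b) = x % ((B:ℤ)*a*b) := by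
    rw [hw_def, Int.add_emod u _, Int.emod_emod_of_dvd _ (dvd_refl ((B:ℤ)*a*b)),
      ← Int.add_emod]
    have h : u + (x % ((B:ℤ)*a*b) - u) = x % ((B:ℤ)*a*b) := by ring
    rw [h, Int.emod_emod_of_dvd _ (dvd_refl ((B:ℤ)*a*b))]
  -- facts about c
  have hP0 : 0 ≤ P := Int.emod_nonneg _ (ne_of_gt hab)
  have hc_mod : c % ((a:ℤ)*b) = P := by
    calc c % ((a:ℤ)*b) = P % ((a:ℤ)*b) := by rw [hc_def]; simp [Int.add_mul_emod_self_left]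
      _ = P := by rw [hP_def]; exact Int.emod_emod_of_dvd _ dvd_rfl
  have hassoc : (j:ℤ)*(a:ℤ)*(n:ℤ) = (j:ℤ)*((a:ℤ)*n) := by ring
  have hcl : u ≤ c := by linarith [hD1, key4, hc_def, hassoc]
  have hcu : c < u + (a:ℤ)*b := by linarith [hD2, key4, hc_def, hassoc]
  -- α ≡ i*A' mod ab
  have hαab : (u + w) % ((a:ℤ)*b) = P := by
    calc (u + w) % ((a:ℤ)*b) = (u + w) % ((B:ℤ)*a*b) % ((a:ℤ)*b) :=
          (Int.emod_emod_of_dvd _ habB).symm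
      _ = x % ((B:ℤ)*a*b) % ((a:ℤ)*b) := by rw [key5]
      _ = x % ((a:ℤ)*b) := Int.emod_emod_of_dvd _ habB
      _ = P := hxab
  have hsub : ((a:ℤ)*b) ∣ (u + w) - c := by
    apply Int.dvd_of_emod_eq_zero
    rw [Int.sub_emod, hαab, hc_mod, sub_self]
    exact Int.zero_emod _
  have hmzmul : ((a:ℤ)*b) * mz = u + w - c := by
    rw [hmz_def]; exact Int.mul_ediv_cancel' hsub
  have hmz0 : 0 ≤ mz := by
    by_contra hcon
    push_neg at hcon
    have h1 : mz ≤ -1 := by omega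
    have h2 : ((a:ℤ)*b) * mz ≤ ((a:ℤ)*b) * (-1) := mul_le_mul_of_nonneg_left h1 hab.le
    linarith [hmzmul, hcu, hw0]
  have hmzB : mz < (B:ℤ) := by
    by_contra hcon
    push_neg at hcon
    have h2 : ((a:ℤ)*b) * (B:ℤ) ≤ ((a:ℤ)*b) * mz := mul_le_mul_of_nonneg_left hcon hab.le
    linarith [hmzmul, hcl, hwB, (by ring : ((a:ℤ)*b)*(B:ℤ) = (B:ℤ)*a*b)]
  have hmcast : (m:ℤ) = mz := Int.toNat_of_nonneg hmz0
  have key3 : m < B := by exact_mod_cast hmcast ▸ hmzB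
  have key1 : u + w = c + (m:ℤ) * ((a:ℤ)*b) := by
    rw [hmcast]
    linarith [hmzmul, mul_comm ((a:ℤ)*(b:ℤ)) mz]
  exact ⟨key2, key3, key1, key4, key5.symm⟩

lemma bind_eq_sum {ι β : Type*} (s : Finset ι) (F : ι → Multiset β) :
    s.val.bind F = ∑ x ∈ s, F x := by
  rw [Finset.sum]
  induction s.val using Multiset.induction with
  | empty => simp
  | cons a t ih => simp [ih]

lemma map_eq_sum {ι β : Type*} (s : Finset ι) (f : ι → β) :
    s.val.map f = ∑ x ∈ s, ({f x} : Multiset β) := by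
  rw [Finset.sum, show (fun x => ({f x} : Multiset β)) = (fun y => ({y} : Multiset β)) ∘ f
    from rfl, ← Multiset.map_map, Multiset.sum_map_singleton]

lemma injX (A B N a b n : ℕ) (hA:0<A) (hB:0<B) (hN:0<N)
    (hapos:0<a) (hbpos:0<b) (hnpos:0<n)
    (hcop1 : Nat.Coprime (A*n) (B*a)) (hcop2 : Nat.Coprime (A*b) (N*a))
    (hcopBN : Nat.Coprime B N)
    (k₁ k₂ : ℕ) (h1 : k₁ ∈ Finset.Icc 1 (a*B*N)) (h2 : k₂ ∈ Finset.Icc 1 (a*B*N))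
    (hi : k₁ % a = k₂ % a) (hj : jX A N a b n k₁ = jX A N a b n k₂)
    (hm : mX A B N a b n k₁ = mX A B N a b n k₂) : k₁ = k₂ := by
  obtain ⟨-, -, hkey1₁, hkey4₁, hkey5₁⟩ := keyX A B N a b n hA hB hN hapos hbpos hnpos k₁
  obtain ⟨-, -, hkey1₂, hkey4₂, hkey5₂⟩ := keyX A B N a b n hA hB hN hapos hbpos hnpos k₂
  -- equal values
  have hu : uX A N a b n k₁ = uX A N a b n k₂ := by rw [hkey4₁, hkey4₂, hi, hj]
  have hα : aoiBasic ((A:ℤ)*b*n) ((B:ℤ)*a*b) ((N:ℤ)*a*n) k₁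
      = aoiBasic ((A:ℤ)*b*n) ((B:ℤ)*a*b) ((N:ℤ)*a*n) k₂ := by
    rw [hkey1₁, hkey1₂, hi, hj, hm]
  have hxB : ((k₁:ℤ) * ((A:ℤ)*b*n)) % ((B:ℤ)*a*b)
      = ((k₂:ℤ) * ((A:ℤ)*b*n)) % ((B:ℤ)*a*b) := by rw [hkey5₁, hkey5₂, hα]
  have hxN : ((k₁:ℤ) * ((A:ℤ)*b*n)) % ((N:ℤ)*a*n)
      = ((k₂:ℤ) * ((A:ℤ)*b*n)) % ((N:ℤ)*a*n) := hu
  -- to divisibility in ℕ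
  set d : ℕ := ((k₁:ℤ) - k₂).natAbs with hd_def
  have hcastN : ((N:ℤ)*a*n) = ((N*a*n : ℕ):ℤ) := by push_cast; ring
  have hcastB : ((B:ℤ)*a*b) = ((B*a*b : ℕ):ℤ) := by push_cast; ring
  have hcastA : ((A:ℤ)*b*n) = ((A*b*n : ℕ):ℤ) := by push_cast; ring
  have hdN : (N*a*n : ℕ) ∣ d * (A*b*n) := by
    have h : (((N*a*n : ℕ)):ℤ) ∣ ((k₂:ℤ) * ((A:ℤ)*b*n)) - ((k₁:ℤ) * ((A:ℤ)*b*n)) := by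
      rw [← hcastN]
      exact Int.ModEq.dvd hxN
    have h2 : (((N*a*n : ℕ)):ℤ) ∣ ((k₁:ℤ) - k₂) * ((A*b*n : ℕ):ℤ) := by
      rw [← hcastA]
      have := dvd_neg.mpr h
      simpa [mul_comm, mul_sub, sub_mul] using this
    have h3 := Int.natAbs_dvd_natAbs.mpr h2
    simpa [Int.natAbs_mul] using h3
  have hdB : (B*a*b : ℕ) ∣ d * (A*b*n) := by
    have h : (((B*a*b : ℕ)):ℤ) ∣ ((k₂:ℤ) * ((A:ℤ)*b*n)) - ((k₁:ℤ) * ((A:ℤ)*b*n)) := by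
      rw [← hcastB]
      exact Int.ModEq.dvd hxB
    have h2 : (((B*a*b : ℕ)):ℤ) ∣ ((k₁:ℤ) - k₂) * ((A*b*n : ℕ):ℤ) := by
      rw [← hcastA]
      have := dvd_neg.mpr h
      simpa [mul_comm, mul_sub, sub_mul] using this
    have h3 := Int.natAbs_dvd_natAbs.mpr h2
    simpa [Int.natAbs_mul] using h3
  -- cancel and use coprimality
  have hNa_d : N*a ∣ d := by
    have e1 : d * (A*b*n) = (d * (A*b)) * n := by ring
    have e2 : N*a*n = (N*a)*n := by ring
    rw [e1, e2] at hdN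
    have h3 : N*a ∣ d*(A*b) := (Nat.mul_dvd_mul_iff_right hnpos).mp hdN
    exact Nat.Coprime.dvd_of_dvd_mul_right hcop2.symm h3
  have hBa_d : B*a ∣ d := by
    have e1 : d * (A*b*n) = (d * (A*n)) * b := by ring
    have e2 : B*a*b = (B*a)*b := by ring
    rw [e1, e2] at hdB
    have h3 : B*a ∣ d*(A*n) := (Nat.mul_dvd_mul_iff_right hbpos).mp hdB
    exact Nat.Coprime.dvd_of_dvd_mul_right hcop1.symm h3
  obtain ⟨s, hs⟩ := hNa_d
  have hB_Ns : B ∣ N*s := by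
    have e : d = (N*s)*a := by rw [hs]; ring
    rw [e] at hBa_d
    exact (Nat.mul_dvd_mul_iff_right hapos).mp hBa_d
  obtain ⟨t, ht⟩ := hcopBN.dvd_of_dvd_mul_left hB_Ns
  have hdvd : a*B*N ∣ d := ⟨t, by rw [hs, ht]; ring⟩
  have hk1 := Finset.mem_Icc.mp h1
  have hk2 := Finset.mem_Icc.mp h2
  have hdlt : d < a*B*N := by omega
  have : d = 0 := Nat.eq_zero_of_dvd_of_lt hdvd hdlt
  omega

end AoI5

/-- Theorem 1 (distribution part): in the basic model, over `a·B·N` consecutive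
steps the AoI sequence generates the multiset union over `i = 0,…,a−1` and
`j = 0,…,N−1` of the arithmetic progressions `{c_{ij} + m·a·b : m = 0,…,B−1}`. -/
theorem stmt5 (A B N a b n : ℕ) (hA : 0 < A) (hB : 0 < B) (hN : 0 < N)
    (hapos : 0 < a) (hbpos : 0 < b) (hnpos : 0 < n)
    (ha : a = Nat.gcd (B * a * b) (N * a * n))
    (hb : b = Nat.gcd (A * b * n) (B * a * b))
    (hn : n = Nat.gcd (A * b * n) (N * a * n)) :
    (Finset.Icc 1 (a * B * N)).val.map
        (fun k => aoiBasic (A * b * n : ℤ) (B * a * b : ℤ) (N * a * n : ℤ) k) =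
      ((Finset.range a ×ˢ Finset.range N).val.bind
        (fun p => (Multiset.range B).map
          (fun m => cBasic (A * b * n) a b n p.1 p.2 + (m : ℤ) * ((a : ℤ) * b)))) := by
  -- coprimality facts
  have hcop1 : Nat.Coprime (A*n) (B*a) := by
    have h := hb
    rw [show A*b*n = b*(A*n) by ring, show B*a*b = b*(B*a) by ring, Nat.gcd_mul_left] at h
    exact (Nat.eq_of_mul_eq_mul_left hbpos (by rw [mul_one]; exact h)).symm
  have hcop2 : Nat.Coprime (A*b) (N*a) := by
    have h := hn
    rw [show A*b*n = n*(A*b) by ring, show N*a*n = n*(N*a) by ring, Nat.gcd_mul_left] at h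
    exact (Nat.eq_of_mul_eq_mul_left hnpos (by rw [mul_one]; exact h)).symm
  have hcop3 : Nat.Coprime (B*b) (N*n) := by
    have h := ha
    rw [show B*a*b = a*(B*b) by ring, show N*a*n = a*(N*n) by ring, Nat.gcd_mul_left] at h
    exact (Nat.eq_of_mul_eq_mul_left hapos (by rw [mul_one]; exact h)).symm
  have hcopBN : Nat.Coprime B N :=
    Nat.Coprime.coprime_dvd_left (dvd_mul_right B b)
      (Nat.Coprime.coprime_dvd_right (dvd_mul_right N n) hcop3)
  -- rewrite both sides as Finset sums of singletons
  rw [AoI5.map_eq_sum, AoI5.bind_eq_sum]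
  have hinner : ∀ p : ℕ × ℕ,
      (Multiset.range B).map
        (fun m => cBasic (A*b*n) a b n p.1 p.2 + (m:ℤ) * ((a:ℤ)*b))
      = ∑ m ∈ Finset.range B,
          ({cBasic (A*b*n) a b n p.1 p.2 + ((m:ℕ):ℤ) * ((a:ℤ)*b)} : Multiset ℤ) := by
    intro p
    show Multiset.map _ ((Multiset.range B).bind fun x => {(x:ℤ)}) = _
    rw [Multiset.bind_singleton, Multiset.map_map, ← Finset.range_val, AoI5.map_eq_sum]
    rfl
  simp only [hinner]
  rw [← Finset.sum_product']
  refine Finset.sum_bij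
    (fun k _ => ((k % a, AoI5.jX A N a b n k), AoI5.mX A B N a b n k)) ?_ ?_ ?_ ?_
  · intro k hk
    obtain ⟨hj, hm, -, -, -⟩ := AoI5.keyX A B N a b n hA hB hN hapos hbpos hnpos k
    simp only [Finset.mem_product, Finset.mem_range]
    exact ⟨⟨Nat.mod_lt k hapos, hj⟩, hm⟩
  · intro k₁ hk₁ k₂ hk₂ h
    simp only [Prod.mk.injEq] at h
    exact AoI5.injX A B N a b n hA hB hN hapos hbpos hnpos hcop1 hcop2 hcopBN
      k₁ k₂ hk₁ hk₂ h.1.1 h.1.2 h.2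
  · intro p hp
    obtain ⟨k, hk, he⟩ := Finset.surj_on_of_inj_on_of_card_le
      (fun k (_ : k ∈ Finset.Icc 1 (a*B*N)) =>
        ((k % a, AoI5.jX A N a b n k), AoI5.mX A B N a b n k))
      (fun k hk => by
        obtain ⟨hj, hm, -, -, -⟩ := AoI5.keyX A B N a b n hA hB hN hapos hbpos hnpos k
        simp only [Finset.mem_product, Finset.mem_range]
        exact ⟨⟨Nat.mod_lt k hapos, hj⟩, hm⟩)
      (fun k₁ k₂ hk₁ hk₂ h => by
        simp only [Prod.mk.injEq] at h
        exact AoI5.injX A B N a b n hA hB hN hapos hbpos hnpos hcop1 hcop2 hcopBN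
          k₁ k₂ hk₁ hk₂ h.1.1 h.1.2 h.2)
      (by
        rw [Finset.card_product, Finset.card_product, Finset.card_range, Finset.card_range,
          Finset.card_range, Nat.card_Icc]
        have : a*N*B = a*B*N := by ring
        omega)
      p hp
    exact ⟨k, hk, he.symm⟩
  · intro k hk
    obtain ⟨-, -, hkey1, -, -⟩ := AoI5.keyX A B N a b n hA hB hN hapos hbpos hnpos k
    simp only []
    rw [hkey1]
end

section
/- In the basic model, the exact mean Age-of-Information over one period satisfies (1/(aBN))·Σ_{k=1}^{aBN} α_k = (B' + N' − n + a·b)/2 − (b/N)·( (a·(b+1)/2)·⌊N/b⌋ + ⌈(N % b)·a/b⌉ + Σ_{i=0}^{a−1} Σ_{j=0}^{(N % b)−1} ( ((j − ⌊i·b/a⌋)·n) % b )/b ), as an equality of rational numbers. -/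
open Finset

lemma sum_range_mul' {M : Type*} [AddCommMonoid M] (m n : ℕ) (f : ℕ → M) :
    ∑ k ∈ range (m * n), f k = ∑ j ∈ range n, ∑ x ∈ range m, f (x + m * j) := by
  induction n with
  | zero => simp
  | succ n ih =>
      rw [Nat.mul_succ, Finset.sum_range_add, ih, sum_range_succ]
      congr 1
      exact Finset.sum_congr rfl fun x _ => by rw [add_comm]

lemma exists_inv {c m : ℕ} (h : Nat.Coprime c m) : ∃ d, (c * d) % m = 1 % m := by
  rcases le_or_gt m 1 with hm | hm
  · interval_cases m
    · exact ⟨1, by simp [(Nat.coprime_zero_right c).mp h]⟩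
    · exact ⟨1, by omega⟩
  · obtain ⟨d, -, hd⟩ := Nat.exists_mul_mod_eq_one_of_coprime h hm
    exact ⟨d, by rw [hd, Nat.mod_eq_of_lt hm]⟩

lemma sum_bij_mod {M : Type*} [AddCommMonoid M] {m : ℕ} (hm : 0 < m) {c : ℕ}
    (hc : Nat.Coprime c m) (f : ℕ → M) :
    ∑ x ∈ range m, f (x * c % m) = ∑ x ∈ range m, f x := by
  obtain ⟨d, hd⟩ := exists_inv hc
  have key : ∀ x < m, x * c % m * d % m = x := by
    intro x hx
    calc x * c % m * d % m = x * c * d % m := by rw [Nat.mod_mul_mod]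
      _ = x * (c * d) % m := by rw [mul_assoc]
      _ = x % m * (c * d % m) % m := by rw [Nat.mul_mod]
      _ = x % m * (1 % m) % m := by rw [hd]
      _ = x * 1 % m := by rw [← Nat.mul_mod]
      _ = x := by rw [mul_one, Nat.mod_eq_of_lt hx]
  have key2 : ∀ y < m, y * d % m * c % m = y := by
    intro y hy
    calc y * d % m * c % m = y * d * c % m := by rw [Nat.mod_mul_mod]
      _ = y * (c * d) % m := by rw [mul_assoc, mul_comm d c]
      _ = y % m * (c * d % m) % m := by rw [Nat.mul_mod]
      _ = y % m * (1 % m) % m := by rw [hd]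
      _ = y * 1 % m := by rw [← Nat.mul_mod]
      _ = y := by rw [mul_one, Nat.mod_eq_of_lt hy]
  refine sum_nbij' (fun x => x * c % m) (fun y => y * d % m)
    (fun x _ => mem_range.mpr (Nat.mod_lt _ hm))
    (fun y _ => mem_range.mpr (Nat.mod_lt _ hm))
    (fun x hx => key x (mem_range.mp hx))
    (fun y hy => key2 y (mem_range.mp hy))
    (fun x _ => rfl)

lemma sum_id_cast (m : ℕ) : 2 * (∑ x ∈ range m, (x : ℤ)) = (m : ℤ) * ((m : ℤ) - 1) := by
  have h := Finset.sum_range_id_mul_two m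
  have h2 : ((∑ i ∈ range m, i : ℕ) : ℤ) = ∑ x ∈ range m, (x : ℤ) := by push_cast; rfl
  cases m with
  | zero => simp
  | succ k =>
      have : (((k + 1) * (k + 1 - 1) : ℕ) : ℤ) = ((k:ℤ) + 1) * ((k:ℤ) + 1 - 1) := by
        push_cast; ring
      rw [← h2, mul_comm]
      rw [show ((Nat.succ k : ℕ) : ℤ) = (k : ℤ) + 1 by push_cast; ring]
      calc ((∑ i ∈ range (k+1), i : ℕ) : ℤ) * 2 = (((k + 1) * (k + 1 - 1) : ℕ) : ℤ) := by
            exact_mod_cast congrArg (Nat.cast : ℕ → ℤ) h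
        _ = ((k:ℤ) + 1) * ((k:ℤ) + 1 - 1) := this

lemma sum_shift (Bn : ℕ) (hB : 0 < Bn) (w : ℤ) :
    ∑ t ∈ range Bn, (w + 1 + t) / (Bn : ℤ) = (∑ t ∈ range Bn, (w + t) / (Bn : ℤ)) + 1 := by
  have hcast : ∀ t : ℕ, (w + 1 + (t : ℤ)) = w + ((t + 1 : ℕ) : ℤ) := by
    intro t; push_cast; ring
  rw [sum_congr rfl fun t _ => by rw [hcast t]]
  have h1 := Finset.sum_range_succ' (fun t : ℕ => (w + t) / (Bn : ℤ)) Bn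
  have h2 := Finset.sum_range_succ (fun t : ℕ => (w + t) / (Bn : ℤ)) Bn
  have h3 : (w + (Bn : ℤ)) / (Bn : ℤ) = w / (Bn : ℤ) + 1 := by
    rw [show w + (Bn : ℤ) = w + 1 * Bn by ring,
      Int.add_mul_ediv_right _ _ (by exact_mod_cast hB.ne' : (Bn : ℤ) ≠ 0)]
  simp only [Nat.cast_zero, add_zero] at h1 h2 ⊢
  linarith [h1, h2, h3]

lemma sum_hermite (Bn : ℕ) (hB : 0 < Bn) (w : ℤ) :
    ∑ t ∈ range Bn, (w + t) / (Bn : ℤ) = w := by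
  induction w using Int.induction_on with
  | zero =>
      refine sum_eq_zero fun t ht => ?_
      rw [zero_add]
      exact Int.ediv_eq_zero_of_lt (by positivity) (by exact_mod_cast mem_range.mp ht)
  | succ k ih => rw [sum_shift Bn hB k, ih]
  | pred k ih =>
      have h := sum_shift Bn hB (-(k : ℤ) - 1)
      have hcast : ∀ t : ℕ, (-(k:ℤ) - 1 + 1 + (t:ℤ)) = -(k:ℤ) + t := by intro t; ring
      rw [sum_congr rfl fun t _ => by rw [hcast t], ih] at h
      linarith


lemma ediv_beta {β Bz : ℤ} (hβ : 0 < β) (hBz : 0 < Bz) (c s : ℤ) (hs : 0 ≤ s) (hs' : s < β) :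
    (β * c + s) / (β * Bz) = c / Bz := by
  have h1 : β * c + s = c % Bz * β + s + (c / Bz) * (β * Bz) := by
    linear_combination (-β) * (Int.mul_ediv_add_emod c Bz)
  rw [h1, Int.add_mul_ediv_right _ _ (by positivity : (β * Bz) ≠ 0)]
  have hm0 : 0 ≤ c % Bz := Int.emod_nonneg c hBz.ne'
  have hm1 : c % Bz < Bz := Int.emod_lt_of_pos c hBz
  have h2 : (c % Bz * β + s) / (β * Bz) = 0 :=
    Int.ediv_eq_zero_of_lt (by positivity) (by nlinarith)
  rw [h2, zero_add]

lemma aoi_sum_inner {β : ℤ} (hβ : 0 < β) (Bn : ℕ) (hB : 0 < Bn) (z : ℤ) :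
    ∑ t ∈ range Bn, (z + β * t) / (β * Bn) = z / β := by
  have hBz : (0:ℤ) < (Bn:ℤ) := by exact_mod_cast hB
  have hpt : ∀ t : ℕ, (z + β * t) / (β * Bn) = (z / β + t) / (Bn : ℤ) := by
    intro t
    have h1 : z + β * t = β * (z / β + t) + z % β := by
      linear_combination -Int.mul_ediv_add_emod z β
    rw [h1, ediv_beta hβ hBz _ _ (Int.emod_nonneg z hβ.ne') (Int.emod_lt_of_pos z hβ)]
  rw [sum_congr rfl fun t _ => hpt t, sum_hermite Bn hB]

lemma emod_pair {bz : ℤ} (hb : 0 < bz) (x y : ℤ) (h : bz ∣ x + y) :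
    x % bz + y % bz = if bz ∣ y then 0 else bz := by
  by_cases hy : bz ∣ y
  · have hx : bz ∣ x := by
      have := dvd_sub h hy
      simpa using this
    simp [hy, Int.emod_eq_zero_of_dvd hx, Int.emod_eq_zero_of_dvd hy]
  · rw [if_neg hy]
    have h1 : (x % bz + y % bz) % bz = 0 := by
      have e : (x % bz + y % bz) % bz = (x + y) % bz := by
        conv_rhs => rw [Int.add_emod]
      rw [e]
      exact Int.emod_eq_zero_of_dvd h
    have hx0 : 0 ≤ x % bz := Int.emod_nonneg x hb.ne'
    have hx1 : x % bz < bz := Int.emod_lt_of_pos x hb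
    have hy0 : 0 ≤ y % bz := Int.emod_nonneg y hb.ne'
    have hy1 : y % bz < bz := Int.emod_lt_of_pos y hb
    have hyne : y % bz ≠ 0 := fun hc => hy (Int.dvd_of_emod_eq_zero hc)
    obtain ⟨k, hk⟩ := Int.dvd_of_emod_eq_zero h1
    have hs1 : 0 < x % bz + y % bz := by omega
    have hs2 : x % bz + y % bz < 2 * bz := by omega
    have hkpos : 0 < k := by nlinarith
    have hklt : k < 2 := by nlinarith
    have hk1 : k = 1 := by omega
    rw [hk1] at hk; linarith

lemma count_lemma (a b r : ℕ) (hb : 0 < b) (hr : r < b) :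
    ((range a).filter (fun i => i * b < r * a)).card = (r * a + b - 1) / b := by
  have hiff : ∀ i, i * b < r * a ↔ i < (r * a + b - 1) / b := by
    intro i
    have key : ∀ x y : ℕ, (x < y ↔ x + b ≤ y + b - 1) := by intro x y; omega
    calc i * b < r * a ↔ i * b + b ≤ r * a + b - 1 := key _ _
      _ ↔ (i + 1) * b ≤ r * a + b - 1 := by rw [add_mul, one_mul]
      _ ↔ i + 1 ≤ (r * a + b - 1) / b := (Nat.le_div_iff_mul_le hb).symm
      _ ↔ i < (r * a + b - 1) / b := Nat.lt_iff_add_one_le.symm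
  have hfe : (range a).filter (fun i => i * b < r * a)
      = (range a).filter (fun i => i < (r * a + b - 1) / b) :=
    filter_congr fun i _ => by rw [hiff]
  have hra : r * a ≤ b * a - a := by
    have : r * a ≤ (b - 1) * a := Nat.mul_le_mul_right a (by omega)
    rwa [Nat.sub_mul, one_mul] at this
  have hZa : (r * a + b - 1) / b ≤ a := by
    rw [Nat.div_le_iff_le_mul_add_pred hb]
    have hba : a ≤ b * a := Nat.le_mul_of_pos_left a hb
    omega
  have hset : (range a).filter (fun i => i < (r * a + b - 1) / b)
      = range ((r * a + b - 1) / b) := by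
    ext x
    simp only [mem_filter, mem_range]
    constructor
    · rintro ⟨_, h2⟩; exact h2
    · intro hx; exact ⟨lt_of_lt_of_le hx hZa, hx⟩
  rw [hfe, hset, card_range]

lemma floor_cast (p b : ℕ) : ⌊(p : ℚ) / (b : ℚ)⌋ = ((p / b : ℕ) : ℤ) := by
  have h1 : ((p : ℤ) : ℚ) = (p : ℚ) := by push_cast; rfl
  rw [← h1, Rat.floor_intCast_div_natCast]
  exact_mod_cast (Int.natCast_ediv p b).symm

lemma ceil_cast (p b : ℕ) (hb : 0 < b) :
    ⌈(p : ℚ) / (b : ℚ)⌉ = (((p + b - 1) / b : ℕ) : ℤ) := by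
  set Z := (p + b - 1) / b with hZ
  have hd : Z * b + (p + b - 1) % b = p + b - 1 := by
    rw [mul_comm]; exact Nat.div_add_mod (p + b - 1) b
  have hm := Nat.mod_lt (p + b - 1) hb
  have h1 : p ≤ Z * b := by omega
  have h2 : Z * b ≤ p + b - 1 := by omega
  rw [Int.ceil_eq_iff]
  constructor
  · rw [lt_div_iff₀ (by exact_mod_cast hb : (0:ℚ) < b)]
    push_cast
    have h2q : (Z : ℚ) * b ≤ (p:ℚ) + b - 1 := by
      have := h2
      have hc : ((Z * b : ℕ) : ℚ) ≤ ((p + b - 1 : ℕ) : ℚ) := by exact_mod_cast h2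
      push_cast at hc
      rw [Nat.cast_sub (by omega : 1 ≤ p + b)] at hc
      push_cast at hc
      linarith
    have hb1 : (1:ℚ) ≤ b := by exact_mod_cast hb
    nlinarith
  · rw [div_le_iff₀ (by exact_mod_cast hb : (0:ℚ) < b)]
    exact_mod_cast h1

lemma sumM2 {b n : ℕ} (hb : 0 < b) (hnb : Nat.Coprime n b) (e : ℤ) :
    2 * (∑ t ∈ range b, (e - (n:ℤ) * t) / (b:ℤ))
      = 2 * (e - b + 1) - ((n:ℤ) - 1) * ((b:ℤ) - 1) := by
  have hbz : ((b:ℤ)) ≠ 0 := by exact_mod_cast hb.ne'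
  have hpt : ∀ t : ℕ, (e - (n:ℤ)*t) / (b:ℤ)
      = (e - (((t*n) % b : ℕ) : ℤ)) / (b:ℤ) - (((t*n)/b : ℕ) : ℤ) := by
    intro t
    have hd : (t*n) % b + b * ((t*n)/b) = t*n := Nat.mod_add_div _ _
    have hc : (((t*n) % b : ℕ) : ℤ) + (b:ℤ) * (((t*n)/b : ℕ) : ℤ) = (t:ℤ)*(n:ℤ) := by
      exact_mod_cast hd
    have h1 : e - (n:ℤ)*t = (e - (((t*n) % b : ℕ) : ℤ)) + (-((((t*n)/b : ℕ)) : ℤ)) * (b:ℤ) := by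
      linarith [hc]
    rw [h1, Int.add_mul_ediv_right _ _ hbz]
    ring
  rw [sum_congr rfl fun t _ => hpt t, sum_sub_distrib]
  have hs1 : ∑ t ∈ range b, (e - (((t*n) % b : ℕ) : ℤ)) / (b:ℤ) = e - b + 1 := by
    rw [sum_bij_mod hb hnb (fun y => (e - (y:ℤ)) / (b:ℤ))]
    rw [← Finset.sum_range_reflect]
    have hcongr : ∀ j ∈ range b, (e - ((b - 1 - j : ℕ) : ℤ)) / (b:ℤ)
        = ((e - b + 1) + (j:ℤ)) / (b:ℤ) := by
      intro j hj
      have hj' := mem_range.mp hj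
      have hcast : ((b - 1 - j : ℕ) : ℤ) = (b:ℤ) - 1 - (j:ℤ) := by omega
      rw [hcast]; ring_nf
    rw [sum_congr rfl hcongr, sum_hermite b hb]
  have hs2 : (b:ℤ) * (2 * ∑ t ∈ range b, (((t*n)/b : ℕ) : ℤ))
      = (b:ℤ) * (((n:ℤ) - 1) * ((b:ℤ) - 1)) := by
    have hdd : ∀ t : ℕ, (b:ℤ) * (((t*n)/b : ℕ) : ℤ)
        = ((t*n : ℕ) : ℤ) - (((t*n) % b : ℕ) : ℤ) := by
      intro t
      have hd : (t*n) % b + b * ((t*n)/b) = t*n := Nat.mod_add_div _ _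
      have hc : (((t*n) % b : ℕ) : ℤ) + (b:ℤ) * (((t*n)/b : ℕ) : ℤ) = ((t*n : ℕ) : ℤ) := by
        exact_mod_cast hd
      linarith
    have hsum : (b:ℤ) * ∑ t ∈ range b, (((t*n)/b : ℕ) : ℤ)
        = ∑ t ∈ range b, ((((t*n : ℕ)) : ℤ) - (((t*n) % b : ℕ) : ℤ)) := by
      rw [mul_sum]; exact sum_congr rfl fun t _ => hdd t
    have hxn : ∑ x ∈ range b, ((x*n : ℕ) : ℤ) = (n:ℤ) * ∑ x ∈ range b, (x:ℤ) := by
      rw [mul_sum]; push_cast; exact sum_congr rfl fun x _ => by ring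
    have hmodsum : ∑ t ∈ range b, (((t*n) % b : ℕ) : ℤ) = ∑ t ∈ range b, (t:ℤ) :=
      sum_bij_mod hb hnb (fun y => (y : ℤ))
    calc (b:ℤ) * (2 * ∑ t ∈ range b, (((t*n)/b : ℕ) : ℤ))
        = 2 * ((b:ℤ) * ∑ t ∈ range b, (((t*n)/b : ℕ) : ℤ)) := by ring
      _ = 2 * (∑ t ∈ range b, ((t*n : ℕ) : ℤ) - ∑ t ∈ range b, (((t*n) % b : ℕ) : ℤ)) := by
          rw [hsum, sum_sub_distrib]
      _ = 2 * ((n:ℤ) * ∑ t ∈ range b, (t:ℤ) - ∑ t ∈ range b, (t:ℤ)) := by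
          rw [hxn, hmodsum]
      _ = ((n:ℤ) - 1) * ((∑ t ∈ range b, (t:ℤ)) * 2) := by ring
      _ = ((n:ℤ) - 1) * ((b:ℤ) * ((b:ℤ) - 1)) := by
          rw [show (∑ t ∈ range b, (t:ℤ)) * 2 = 2 * ∑ t ∈ range b, (t:ℤ) by ring, sum_id_cast]
      _ = (b:ℤ) * (((n:ℤ) - 1) * ((b:ℤ) - 1)) := by ring
  have hs2' : 2 * ∑ t ∈ range b, (((t*n)/b : ℕ) : ℤ) = ((n:ℤ) - 1) * ((b:ℤ) - 1) :=
    mul_left_cancel₀ hbz hs2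
  rw [mul_sub, hs1]
  linarith [hs2']

lemma sumM {b n N q r : ℕ} (hb : 0 < b) (hnb : Nat.Coprime n b) (hq : N = b*q + r) (e : ℤ) :
    2 * (∑ m ∈ range N, (e - (n:ℤ)*m) / (b:ℤ)) =
      2*(q:ℤ)*e + 2*(q:ℤ)*(1-(b:ℤ)) - (q:ℤ)*((n:ℤ)-1)*((b:ℤ)-1) - (n:ℤ)*b*q*((q:ℤ)-1)
        + 2*(∑ j ∈ range r, (e - (n:ℤ)*j) / (b:ℤ)) - 2*(r:ℤ)*n*q := by
  have hbz : ((b:ℤ)) ≠ 0 := by exact_mod_cast hb.ne'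
  subst hq
  rw [Finset.sum_range_add]
  have hhead : 2 * (∑ m ∈ range (b*q), (e - (n:ℤ)*m)/(b:ℤ))
      = (q:ℤ)*(2*(e - b + 1) - ((n:ℤ)-1)*((b:ℤ)-1)) - (n:ℤ)*(b:ℤ)*q*((q:ℤ)-1) := by
    rw [sum_range_mul' b q]
    have hpt : ∀ s ∈ range q, ∀ t ∈ range b,
        (e - (n:ℤ)*((t + b*s : ℕ):ℤ))/(b:ℤ) = (e - (n:ℤ)*t)/(b:ℤ) - (n:ℤ)*s := by
      intro s _ t _
      have h1 : e - (n:ℤ)*((t + b*s : ℕ):ℤ) = (e - (n:ℤ)*t) + (-((n:ℤ)*s))*(b:ℤ) := by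
        push_cast; ring
      rw [h1, Int.add_mul_ediv_right _ _ hbz]; ring
    rw [sum_congr rfl fun s hs => sum_congr rfl fun t ht => hpt s hs t ht]
    have hinner : ∀ s : ℕ, ∑ t ∈ range b, ((e - (n:ℤ)*t)/(b:ℤ) - (n:ℤ)*s)
        = (∑ t ∈ range b, (e - (n:ℤ)*t)/(b:ℤ)) - (b:ℤ)*((n:ℤ)*s) := by
      intro s
      rw [sum_sub_distrib, sum_const, card_range, nsmul_eq_mul]
    rw [sum_congr rfl fun s _ => hinner s, sum_sub_distrib]
    have h2 : ∑ s ∈ range q, (b:ℤ)*((n:ℤ)*s) = (b:ℤ)*(n:ℤ)*(∑ s ∈ range q, (s:ℤ)) := by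
      rw [mul_sum]; exact sum_congr rfl fun s _ => by ring
    rw [sum_const, card_range, nsmul_eq_mul, h2]
    have h3 := sumM2 hb hnb e
    have h4 := sum_id_cast q
    linear_combination (q:ℤ) * h3 - (b:ℤ) * (n:ℤ) * h4
  have htail : ∀ j ∈ range r, (e - (n:ℤ)*((b*q + j : ℕ):ℤ))/(b:ℤ)
      = (e - (n:ℤ)*j)/(b:ℤ) - (n:ℤ)*q := by
    intro j _
    have h1 : e - (n:ℤ)*((b*q + j : ℕ):ℤ) = (e - (n:ℤ)*j) + (-((n:ℤ)*q))*(b:ℤ) := by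
      push_cast; ring
    rw [h1, Int.add_mul_ediv_right _ _ hbz]; ring
  rw [sum_congr rfl htail, sum_sub_distrib, sum_const, card_range, nsmul_eq_mul]
  rw [mul_add, hhead]
  ring

lemma final_assembly (a b n B q r Z D E1 J T SS S : ℚ) (ha : a ≠ 0) (hb : b ≠ 0) (hB : B ≠ 0)
    (hN : b*q + r ≠ 0)
    (h1 : S = SS - (B*a*b)*T)
    (h2 : 2*SS = (b*q+r)*b*(B*a)*(B*a-1))
    (h3 : 2*T = 2*q*E1 + a*(2*q*(1-b) - q*(n-1)*(b-1) - n*b*q*(q-1)) + 2*J - a*(2*r*n*q))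
    (h4 : 2*E1 = (b-n)*(a-1))
    (h5 : 2*b*J = 2*r*E1 - a*n*r*(r-1) - 2*b*(a*r-Z) + 2*D) :
    (1/(a*B*(b*q+r)))*S
      = ((B*a*b) + ((b*q+r)*a*n) - n + a*b)/2 - (b/(b*q+r))*((a*(b+1)/2)*q + Z + D/b) := by
  have e1 : E1 = (b-n)*(a-1)/2 := by linarith
  have j1 : J = (2*r*E1 - a*n*r*(r-1) - 2*b*(a*r-Z) + 2*D)/(2*b) := by
    field_simp
    linarith [h5]
  have t1 : T = (2*q*E1 + a*(2*q*(1-b) - q*(n-1)*(b-1) - n*b*q*(q-1)) + 2*J - a*(2*r*n*q))/2 := by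
    linarith
  have ss1 : SS = ((b*q+r)*b*(B*a)*(B*a-1))/2 := by linarith
  rw [h1, ss1, t1, j1, e1]
  field_simp
  ring
lemma aoi_inner_sum {B a b : ℕ} (hB : 0 < B) (ha : 0 < a) (hb : 0 < b) {c : ℕ}
    (hcB : Nat.Coprime c B) (X R : ℤ) :
    ∑ j ∈ range B, ((X + ((a:ℤ)*(b:ℤ))*(((j*c : ℕ)):ℤ)) % ((a:ℤ)*(b:ℤ)*(B:ℤ)) - R)
        / ((a:ℤ)*(b:ℤ)*(B:ℤ))
      = (X - R) / ((a:ℤ)*(b:ℤ)) - X / ((a:ℤ)*(b:ℤ)) := by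
  have hab : (0:ℤ) < (a:ℤ)*(b:ℤ) := by positivity
  have habB : ((a:ℤ)*(b:ℤ)*(B:ℤ)) ≠ 0 := by positivity
  have hred : ∀ j : ℕ, (X + ((a:ℤ)*(b:ℤ))*(((j*c : ℕ)):ℤ)) % ((a:ℤ)*(b:ℤ)*(B:ℤ))
      = (X + ((a:ℤ)*(b:ℤ))*((((j*c) % B : ℕ)):ℤ)) % ((a:ℤ)*(b:ℤ)*(B:ℤ)) := by
    intro j
    have hd : (j*c) % B + B * ((j*c)/B) = j*c := Nat.mod_add_div _ _
    have hc2 : (((j*c)%B : ℕ):ℤ) + (B:ℤ)*(((j*c)/B : ℕ):ℤ) = ((j*c : ℕ):ℤ) := by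
      exact_mod_cast hd
    have he : X + ((a:ℤ)*(b:ℤ))*(((j*c : ℕ)):ℤ)
        = X + ((a:ℤ)*(b:ℤ))*((((j*c) % B : ℕ)):ℤ)
          + (((j*c)/B : ℕ):ℤ)*((a:ℤ)*(b:ℤ)*(B:ℤ)) := by
      linear_combination (-((a:ℤ)*(b:ℤ))) * hc2
    rw [he, Int.add_mul_emod_self_right]
  rw [sum_congr rfl fun j _ => by rw [hred j]]
  rw [sum_bij_mod hB hcB
    (fun t => ((X + ((a:ℤ)*(b:ℤ))*((t:ℕ):ℤ)) % ((a:ℤ)*(b:ℤ)*(B:ℤ)) - R) / ((a:ℤ)*(b:ℤ)*(B:ℤ)))]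
  have hpt : ∀ t : ℕ, ((X + ((a:ℤ)*(b:ℤ))*(t:ℤ)) % ((a:ℤ)*(b:ℤ)*(B:ℤ)) - R) / ((a:ℤ)*(b:ℤ)*(B:ℤ))
      = ((X - R) + ((a:ℤ)*(b:ℤ))*t)/((a:ℤ)*(b:ℤ)*(B:ℤ))
        - (X + ((a:ℤ)*(b:ℤ))*t)/((a:ℤ)*(b:ℤ)*(B:ℤ)) := by
    intro t
    have h1 : (X + ((a:ℤ)*(b:ℤ))*t) % ((a:ℤ)*(b:ℤ)*(B:ℤ))
        = X + ((a:ℤ)*(b:ℤ))*t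
          - ((a:ℤ)*(b:ℤ)*(B:ℤ))*((X + ((a:ℤ)*(b:ℤ))*t)/((a:ℤ)*(b:ℤ)*(B:ℤ))) :=
      Int.emod_def _ _
    rw [h1]
    have h2 : X + ((a:ℤ)*(b:ℤ))*t
          - ((a:ℤ)*(b:ℤ)*(B:ℤ))*((X + ((a:ℤ)*(b:ℤ))*t)/((a:ℤ)*(b:ℤ)*(B:ℤ))) - R
        = ((X - R) + ((a:ℤ)*(b:ℤ))*t)
          + (-((X + ((a:ℤ)*(b:ℤ))*t)/((a:ℤ)*(b:ℤ)*(B:ℤ))))*((a:ℤ)*(b:ℤ)*(B:ℤ)) := by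
      ring
    rw [h2, Int.add_mul_ediv_right _ _ habB]
    ring
  rw [sum_congr rfl fun t _ => hpt t, sum_sub_distrib]
  rw [aoi_sum_inner hab B hB (X - R), aoi_sum_inner hab B hB X]
lemma sumT_val (A B N a b n c' : ℕ) (hA : 0 < A) (hB : 0 < B) (hN : 0 < N)
    (ha : 0 < a) (hb : 0 < b) (hn : 0 < n)
    (hc' : (A*b*c') % a = 1 % a)
    (hg3 : Nat.Coprime (A*b) (N*a))
    (hcNAnB : Nat.Coprime (N*A*n) B) :
    ∑ k ∈ range ((N*a)*B),
        (((k:ℤ)*((A:ℤ)*(b:ℤ)*(n:ℤ))) % ((B:ℤ)*(a:ℤ)*(b:ℤ))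
          - ((k:ℤ)*((A:ℤ)*(b:ℤ)*(n:ℤ))) % ((N:ℤ)*(a:ℤ)*(n:ℤ))) / ((B:ℤ)*(a:ℤ)*(b:ℤ))
      = ∑ m ∈ range N, ∑ ρ ∈ range a,
          (((b:ℤ)*((((ρ*(c'*A*n)) % a : ℕ)):ℤ) - (n:ℤ)*(ρ:ℤ))/(a:ℤ) - (n:ℤ)*(m:ℤ))/(b:ℤ) := by
  have haz : (0:ℤ) < (a:ℤ) := by exact_mod_cast ha
  have hbz : (0:ℤ) < (b:ℤ) := by exact_mod_cast hb
  have hnz : (0:ℤ) < (n:ℤ) := by exact_mod_cast hn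
  have hNa : 0 < N*a := by positivity
  have habz : ((a:ℤ)*(b:ℤ)) ≠ 0 := by positivity
  have hc'' : A*b*c' ≡ 1 [MOD a] := hc'
  rw [show ((B:ℤ)*(a:ℤ)*(b:ℤ)) = ((a:ℤ)*(b:ℤ)*(B:ℤ)) from by ring]
  rw [sum_range_mul' (N*a) B]
  rw [Finset.sum_comm]
  have hinner : ∀ x ∈ range (N*a),
      ∑ j ∈ range B,
        (((x + (N*a)*j : ℕ):ℤ)*((A:ℤ)*(b:ℤ)*(n:ℤ)) % ((a:ℤ)*(b:ℤ)*(B:ℤ))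
          - ((x + (N*a)*j : ℕ):ℤ)*((A:ℤ)*(b:ℤ)*(n:ℤ)) % ((N:ℤ)*(a:ℤ)*(n:ℤ)))
            / ((a:ℤ)*(b:ℤ)*(B:ℤ))
      = (((x:ℤ)*((A:ℤ)*(b:ℤ)*(n:ℤ)) - (x:ℤ)*((A:ℤ)*(b:ℤ)*(n:ℤ)) % ((N:ℤ)*(a:ℤ)*(n:ℤ)))
          / ((a:ℤ)*(b:ℤ)))
        - ((x:ℤ)*((A:ℤ)*(b:ℤ)*(n:ℤ))) / ((a:ℤ)*(b:ℤ)) := by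
    intro x _
    have hptj : ∀ j ∈ range B,
        (((x + (N*a)*j : ℕ):ℤ)*((A:ℤ)*(b:ℤ)*(n:ℤ)) % ((a:ℤ)*(b:ℤ)*(B:ℤ))
          - ((x + (N*a)*j : ℕ):ℤ)*((A:ℤ)*(b:ℤ)*(n:ℤ)) % ((N:ℤ)*(a:ℤ)*(n:ℤ)))
            / ((a:ℤ)*(b:ℤ)*(B:ℤ))
        = (((x:ℤ)*((A:ℤ)*(b:ℤ)*(n:ℤ)) + ((a:ℤ)*(b:ℤ))*(((j*(N*A*n) : ℕ)):ℤ))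
              % ((a:ℤ)*(b:ℤ)*(B:ℤ))
            - ((x:ℤ)*((A:ℤ)*(b:ℤ)*(n:ℤ))) % ((N:ℤ)*(a:ℤ)*(n:ℤ))) / ((a:ℤ)*(b:ℤ)*(B:ℤ)) := by
      intro j _
      have e1 : ((x + (N*a)*j : ℕ):ℤ)*((A:ℤ)*(b:ℤ)*(n:ℤ))
          = (x:ℤ)*((A:ℤ)*(b:ℤ)*(n:ℤ)) + ((a:ℤ)*(b:ℤ))*(((j*(N*A*n) : ℕ)):ℤ) := by
        push_cast; ring
      have e2 : ((x + (N*a)*j : ℕ):ℤ)*((A:ℤ)*(b:ℤ)*(n:ℤ))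
          = (x:ℤ)*((A:ℤ)*(b:ℤ)*(n:ℤ)) + (((j*(A*b) : ℕ)):ℤ)*((N:ℤ)*(a:ℤ)*(n:ℤ)) := by
        push_cast; ring
      rw [show ((x + (N*a)*j : ℕ):ℤ)*((A:ℤ)*(b:ℤ)*(n:ℤ)) % ((N:ℤ)*(a:ℤ)*(n:ℤ))
          = ((x:ℤ)*((A:ℤ)*(b:ℤ)*(n:ℤ))) % ((N:ℤ)*(a:ℤ)*(n:ℤ)) from by
        rw [e2, Int.add_mul_emod_self_right]]
      rw [e1]
    rw [sum_congr rfl hptj]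
    exact aoi_inner_sum hB ha hb hcNAnB _ _
  rw [sum_congr rfl hinner]
  have hstage2 : ∀ x ∈ range (N*a),
      (((x:ℤ)*((A:ℤ)*(b:ℤ)*(n:ℤ)) - (x:ℤ)*((A:ℤ)*(b:ℤ)*(n:ℤ)) % ((N:ℤ)*(a:ℤ)*(n:ℤ)))
          / ((a:ℤ)*(b:ℤ)))
        - ((x:ℤ)*((A:ℤ)*(b:ℤ)*(n:ℤ))) / ((a:ℤ)*(b:ℤ))
      = ((b:ℤ)*((((x*(A*n)) % a : ℕ)):ℤ) - (n:ℤ)*((((x*(A*b)) % (N*a) : ℕ)):ℤ))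
          / ((a:ℤ)*(b:ℤ)) := by
    intro x _
    have hR : (x:ℤ)*((A:ℤ)*(b:ℤ)*(n:ℤ)) % ((N:ℤ)*(a:ℤ)*(n:ℤ))
        = (n:ℤ)*((((x*(A*b)) % (N*a) : ℕ)):ℤ) := by
      rw [show (x:ℤ)*((A:ℤ)*(b:ℤ)*(n:ℤ)) = (n:ℤ)*(((x*(A*b) : ℕ)):ℤ) from by push_cast; ring,
        show ((N:ℤ)*(a:ℤ)*(n:ℤ)) = (n:ℤ)*(((N*a : ℕ)):ℤ) from by push_cast; ring,
        Int.mul_emod_mul_of_pos _ _ hnz]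
      norm_cast
    have hE : (x:ℤ)*((A:ℤ)*(b:ℤ)*(n:ℤ)) % ((a:ℤ)*(b:ℤ))
        = (b:ℤ)*((((x*(A*n)) % a : ℕ)):ℤ) := by
      rw [show (x:ℤ)*((A:ℤ)*(b:ℤ)*(n:ℤ)) = (b:ℤ)*(((x*(A*n) : ℕ)):ℤ) from by push_cast; ring,
        show ((a:ℤ)*(b:ℤ)) = (b:ℤ)*(((a : ℕ)):ℤ) from by push_cast; ring,
        Int.mul_emod_mul_of_pos _ _ hbz]
      norm_cast
    have hX := Int.mul_ediv_add_emod ((x:ℤ)*((A:ℤ)*(b:ℤ)*(n:ℤ))) ((a:ℤ)*(b:ℤ))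
    rw [hE] at hX
    -- hX : (a*b)*(X/(a*b)) + b*μ = X
    rw [hR]
    have h5 : (x:ℤ)*((A:ℤ)*(b:ℤ)*(n:ℤ)) - (n:ℤ)*((((x*(A*b)) % (N*a) : ℕ)):ℤ)
        = ((b:ℤ)*((((x*(A*n)) % a : ℕ)):ℤ) - (n:ℤ)*((((x*(A*b)) % (N*a) : ℕ)):ℤ))
          + ((x:ℤ)*((A:ℤ)*(b:ℤ)*(n:ℤ)) / ((a:ℤ)*(b:ℤ)))*((a:ℤ)*(b:ℤ)) := by
      linarith [hX]
    have h6 : (x:ℤ)*((A:ℤ)*(b:ℤ)*(n:ℤ))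
        = ((b:ℤ)*((((x*(A*n)) % a : ℕ)):ℤ) + 0)
          + ((x:ℤ)*((A:ℤ)*(b:ℤ)*(n:ℤ)) / ((a:ℤ)*(b:ℤ)))*((a:ℤ)*(b:ℤ)) := by
      linarith [hX]
    rw [h5, Int.add_mul_ediv_right _ _ habz]
    conv_lhs => rw [h6]
    rw [Int.add_mul_ediv_right _ _ habz]
    have hmu : ((b:ℤ)*((((x*(A*n)) % a : ℕ)):ℤ) + 0) / ((a:ℤ)*(b:ℤ)) = 0 := by
      apply Int.ediv_eq_zero_of_lt
      · positivity
      · have hlt : b*((x*(A*n)) % a) < a*b := by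
          have h7 : (x*(A*n)) % a < a := Nat.mod_lt _ ha
          have h8 : 0 < b := hb
          nlinarith [h7, h8]
        rw [add_zero]
        exact_mod_cast hlt
    rw [hmu]
    ring
  rw [sum_congr rfl hstage2]
  -- reindex x ↦ y = (x*(A*b)) % (N*a)
  have hptx : ∀ x ∈ range (N*a),
      ((b:ℤ)*((((x*(A*n)) % a : ℕ)):ℤ) - (n:ℤ)*((((x*(A*b)) % (N*a) : ℕ)):ℤ)) / ((a:ℤ)*(b:ℤ))
      = (fun y : ℕ => ((b:ℤ)*((((y*(c'*A*n)) % a : ℕ)):ℤ) - (n:ℤ)*(y:ℤ)) / ((a:ℤ)*(b:ℤ)))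
          ((x*(A*b)) % (N*a)) := by
    intro x _
    simp only
    have m1 : (x*(A*b)) % (N*a) ≡ x*(A*b) [MOD a] :=
      (Nat.mod_modEq (x*(A*b)) (N*a)).of_dvd (dvd_mul_left a N)
    have m2 : ((x*(A*b)) % (N*a))*(c'*A*n) ≡ (x*(A*b))*(c'*A*n) [MOD a] := m1.mul_right _
    have m3 : (x*(A*b))*(c'*A*n) = (x*(A*n))*(A*b*c') := by ring
    have m4 : (x*(A*n))*(A*b*c') ≡ (x*(A*n))*1 [MOD a] := Nat.ModEq.mul_left _ hc''
    have mfin : ((x*(A*b)) % (N*a))*(c'*A*n) ≡ x*(A*n) [MOD a] := by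
      calc ((x*(A*b)) % (N*a))*(c'*A*n) ≡ (x*(A*b))*(c'*A*n) [MOD a] := m2
        _ = (x*(A*n))*(A*b*c') := m3
        _ ≡ (x*(A*n))*1 [MOD a] := m4
        _ = x*(A*n) := mul_one _
    have meq : (((x*(A*b)) % (N*a))*(c'*A*n)) % a = (x*(A*n)) % a := mfin
    rw [meq]
  rw [sum_congr rfl hptx]
  rw [sum_bij_mod hNa hg3
    (fun y : ℕ => ((b:ℤ)*((((y*(c'*A*n)) % a : ℕ)):ℤ) - (n:ℤ)*(y:ℤ)) / ((a:ℤ)*(b:ℤ)))]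
  rw [show N*a = a*N from mul_comm N a, sum_range_mul' a N]
  refine sum_congr rfl fun m _ => sum_congr rfl fun ρ _ => ?_
  have p1 : ((ρ + a*m)*(c'*A*n)) % a = (ρ*(c'*A*n)) % a := by
    rw [show (ρ + a*m)*(c'*A*n) = ρ*(c'*A*n) + a*(m*(c'*A*n)) from by ring,
      Nat.add_mul_mod_self_left]
  rw [p1]
  have w1 : b*((ρ*(c'*A*n)) % a) ≡ n*ρ [MOD a] := by
    calc b*((ρ*(c'*A*n)) % a) ≡ b*(ρ*(c'*A*n)) [MOD a] :=
          (Nat.mod_modEq (ρ*(c'*A*n)) a).mul_left b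
      _ = (n*ρ)*(A*b*c') := by ring
      _ ≡ (n*ρ)*1 [MOD a] := Nat.ModEq.mul_left _ hc''
      _ = n*ρ := mul_one _
  have hdvd : ((a:ℤ)) ∣ ((b:ℤ)*((((ρ*(c'*A*n)) % a : ℕ)):ℤ) - (n:ℤ)*(ρ:ℤ)) := by
    have hd0 := w1.dvd
    have h3 : ((b:ℤ)*((((ρ*(c'*A*n)) % a : ℕ)):ℤ) - (n:ℤ)*(ρ:ℤ))
        = -(((n*ρ : ℕ):ℤ) - ((b*((ρ*(c'*A*n)) % a) : ℕ):ℤ)) := by push_cast; ring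
    rw [h3]
    exact dvd_neg.mpr hd0
  have he : (a:ℤ)*(((b:ℤ)*((((ρ*(c'*A*n)) % a : ℕ)):ℤ) - (n:ℤ)*(ρ:ℤ))/(a:ℤ))
      = (b:ℤ)*((((ρ*(c'*A*n)) % a : ℕ)):ℤ) - (n:ℤ)*(ρ:ℤ) := Int.mul_ediv_cancel' hdvd
  have hnum : (b:ℤ)*((((ρ*(c'*A*n)) % a : ℕ)):ℤ) - (n:ℤ)*(((ρ + a*m : ℕ)):ℤ)
      = (a:ℤ)*((((b:ℤ)*((((ρ*(c'*A*n)) % a : ℕ)):ℤ) - (n:ℤ)*(ρ:ℤ))/(a:ℤ)) - (n:ℤ)*(m:ℤ)) := by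
    rw [show (((ρ + a*m : ℕ)):ℤ) = (ρ:ℤ) + (a:ℤ)*(m:ℤ) from by push_cast; ring]
    linear_combination -he
  rw [hnum, show ((a:ℤ)*(b:ℤ)) = ((a:ℤ)*((b:ℤ))) from rfl, Int.mul_ediv_mul_of_pos _ _ haz]
lemma J_val (A a b n r c' : ℕ) (ha : 0 < a) (hb : 0 < b) (hn : 0 < n) (hrb : r < b)
    (hc' : (A*b*c') % a = 1 % a) (cba : Nat.Coprime b a) (cnb : Nat.Coprime n b) :
    2*(b:ℤ)*(∑ ρ ∈ range a, ∑ j ∈ range r,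
        (((b:ℤ)*((((ρ*(c'*A*n)) % a : ℕ)):ℤ) - (n:ℤ)*(ρ:ℤ))/(a:ℤ) - (n:ℤ)*(j:ℤ))/(b:ℤ))
      = 2*(r:ℤ)*(∑ ρ ∈ range a,
            ((b:ℤ)*((((ρ*(c'*A*n)) % a : ℕ)):ℤ) - (n:ℤ)*(ρ:ℤ))/(a:ℤ))
        - (a:ℤ)*(n:ℤ)*(r:ℤ)*((r:ℤ)-1)
        - 2*(b:ℤ)*((a:ℤ)*(r:ℤ) - ((((r*a + b - 1)/b : ℕ)):ℤ))
        + 2*(∑ i ∈ range a, ∑ j ∈ range r,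
            ((j:ℤ) - (((i*b/a : ℕ)):ℤ))*(n:ℤ) % (b:ℤ)) := by
  have haz : (0:ℤ) < (a:ℤ) := by exact_mod_cast ha
  have hbz : (0:ℤ) < (b:ℤ) := by exact_mod_cast hb
  have hc'' : A*b*c' ≡ 1 [MOD a] := hc'
  set eE : ℕ → ℤ := fun ρ => ((b:ℤ)*((((ρ*(c'*A*n)) % a : ℕ)):ℤ) - (n:ℤ)*(ρ:ℤ))/(a:ℤ)
    with heE
  have hdvd : ∀ ρ : ℕ, ((a:ℤ)) ∣ ((b:ℤ)*((((ρ*(c'*A*n)) % a : ℕ)):ℤ) - (n:ℤ)*(ρ:ℤ)) := by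
    intro ρ
    have w1 : b*((ρ*(c'*A*n)) % a) ≡ n*ρ [MOD a] := by
      calc b*((ρ*(c'*A*n)) % a) ≡ b*(ρ*(c'*A*n)) [MOD a] :=
            (Nat.mod_modEq (ρ*(c'*A*n)) a).mul_left b
        _ = (n*ρ)*(A*b*c') := by ring
        _ ≡ (n*ρ)*1 [MOD a] := Nat.ModEq.mul_left _ hc''
        _ = n*ρ := mul_one _
    have h3 : ((b:ℤ)*((((ρ*(c'*A*n)) % a : ℕ)):ℤ) - (n:ℤ)*(ρ:ℤ))
        = -(((n*ρ : ℕ):ℤ) - ((b*((ρ*(c'*A*n)) % a) : ℕ):ℤ)) := by push_cast; ring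
    rw [h3]
    exact dvd_neg.mpr w1.dvd
  have haE : ∀ ρ : ℕ, (a:ℤ) * eE ρ
      = (b:ℤ)*((((ρ*(c'*A*n)) % a : ℕ)):ℤ) - (n:ℤ)*(ρ:ℤ) :=
    fun ρ => Int.mul_ediv_cancel' (hdvd ρ)
  -- step 1: pull b inside
  have h1 : 2*(b:ℤ)*(∑ ρ ∈ range a, ∑ j ∈ range r, (eE ρ - (n:ℤ)*(j:ℤ))/(b:ℤ))
      = 2*(∑ ρ ∈ range a, ∑ j ∈ range r, (eE ρ - (n:ℤ)*(j:ℤ)))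
        - 2*(∑ ρ ∈ range a, ∑ j ∈ range r, (eE ρ - (n:ℤ)*(j:ℤ)) % (b:ℤ)) := by
    have hb1 : (b:ℤ)*(∑ ρ ∈ range a, ∑ j ∈ range r, (eE ρ - (n:ℤ)*(j:ℤ))/(b:ℤ))
        = ∑ ρ ∈ range a, ∑ j ∈ range r,
            ((eE ρ - (n:ℤ)*(j:ℤ)) - (eE ρ - (n:ℤ)*(j:ℤ)) % (b:ℤ)) := by
      rw [mul_sum]
      refine sum_congr rfl fun ρ _ => ?_
      rw [mul_sum]
      refine sum_congr rfl fun j _ => ?_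
      have := Int.mul_ediv_add_emod (eE ρ - (n:ℤ)*(j:ℤ)) (b:ℤ)
      linarith
    have hsplit : ∑ ρ ∈ range a, ∑ j ∈ range r,
          ((eE ρ - (n:ℤ)*(j:ℤ)) - (eE ρ - (n:ℤ)*(j:ℤ)) % (b:ℤ))
        = (∑ ρ ∈ range a, ∑ j ∈ range r, (eE ρ - (n:ℤ)*(j:ℤ)))
          - ∑ ρ ∈ range a, ∑ j ∈ range r, (eE ρ - (n:ℤ)*(j:ℤ)) % (b:ℤ) := by
      rw [← sum_sub_distrib]
      exact sum_congr rfl fun ρ _ => by rw [← sum_sub_distrib]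
    rw [show 2*(b:ℤ)*(∑ ρ ∈ range a, ∑ j ∈ range r, (eE ρ - (n:ℤ)*(j:ℤ))/(b:ℤ))
        = 2*((b:ℤ)*(∑ ρ ∈ range a, ∑ j ∈ range r, (eE ρ - (n:ℤ)*(j:ℤ))/(b:ℤ))) from by ring,
      hb1, hsplit]
    ring
  -- step 2: plain sum value
  have hXsum : ∑ ρ ∈ range a, ∑ j ∈ range r, (eE ρ - (n:ℤ)*(j:ℤ))
      = (r:ℤ)*(∑ ρ ∈ range a, eE ρ) - (a:ℤ)*((n:ℤ)*(∑ j ∈ range r, (j:ℤ))) := by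
    have hinner : ∀ ρ : ℕ, ∑ j ∈ range r, (eE ρ - (n:ℤ)*(j:ℤ))
        = (r:ℤ)*eE ρ - (n:ℤ)*(∑ j ∈ range r, (j:ℤ)) := by
      intro ρ
      rw [sum_sub_distrib, sum_const, card_range, nsmul_eq_mul, ← mul_sum, mul_comm (r:ℤ)]
    rw [sum_congr rfl fun ρ _ => hinner ρ, sum_sub_distrib, sum_const, card_range,
      nsmul_eq_mul, ← mul_sum]
  -- step 3: the mod sum
  have hWmod : ∑ ρ ∈ range a, ∑ j ∈ range r, (eE ρ - (n:ℤ)*(j:ℤ)) % (b:ℤ)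
      = (a:ℤ)*(r:ℤ)*(b:ℤ) - (b:ℤ)*((((r*a + b - 1)/b : ℕ)):ℤ)
        - ∑ i ∈ range a, ∑ j ∈ range r, ((j:ℤ) - (((i*b/a : ℕ)):ℤ))*(n:ℤ) % (b:ℤ) := by
    rw [← sum_bij_mod ha cba (fun y => ∑ j ∈ range r, (eE y - (n:ℤ)*(j:ℤ)) % (b:ℤ))]
    have hcond : ∀ i ∈ range a, ∀ j ∈ range r,
        ((b:ℤ) ∣ ((j:ℤ) - (((i*b/a : ℕ)):ℤ))*(n:ℤ)) ↔ j = i*b/a := by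
      intro i hi j hj
      have hvb : i*b/a < b := by
        rw [Nat.div_lt_iff_lt_mul ha]
        have hia := mem_range.mp hi
        nlinarith [hia, hb]
      have hjb := lt_trans (mem_range.mp hj) hrb
      constructor
      · intro hdd
        have hcn : IsCoprime ((b:ℤ)) ((n:ℤ)) := by
          rw [Nat.isCoprime_iff_coprime]; exact cnb.symm
        have h7 : (b:ℤ) ∣ ((j:ℤ) - (((i*b/a : ℕ)):ℤ)) := hcn.dvd_of_dvd_mul_right hdd
        obtain ⟨k, hk⟩ := h7
        have hj' : (j:ℤ) < (b:ℤ) := by exact_mod_cast hjb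
        have hv' : ((((i*b/a : ℕ))):ℤ) < (b:ℤ) := by exact_mod_cast hvb
        have hj0 : (0:ℤ) ≤ (j:ℤ) := by positivity
        have hv0 : (0:ℤ) ≤ ((((i*b/a : ℕ))):ℤ) := by positivity
        have hk0 : k = 0 := by nlinarith
        have : (j:ℤ) = ((((i*b/a : ℕ))):ℤ) := by
          rw [hk0] at hk; linarith [hk]
        exact_mod_cast this
      · intro hjv
        subst hjv
        simp
    have hpt : ∀ i ∈ range a, ∀ j ∈ range r,
        (eE ((i*b) % a) - (n:ℤ)*(j:ℤ)) % (b:ℤ)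
        = (if j = i*b/a then (0:ℤ) else (b:ℤ))
          - ((j:ℤ) - (((i*b/a : ℕ)):ℤ))*(n:ℤ) % (b:ℤ) := by
      intro i hi j hj
      have hdvdsum : (b:ℤ) ∣ (eE ((i*b) % a) - (n:ℤ)*(j:ℤ))
          + ((j:ℤ) - (((i*b/a : ℕ)):ℤ))*(n:ℤ) := by
        have hdm : (a:ℤ)*(((i*b/a : ℕ)):ℤ) = ((i*b : ℕ):ℤ) - (((i*b) % a : ℕ):ℤ) := by
          have := Nat.div_add_mod (i*b) a
          have hc2 : (a:ℤ)*(((i*b/a : ℕ)):ℤ) + (((i*b) % a : ℕ):ℤ) = ((i*b : ℕ):ℤ) := by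
            exact_mod_cast this
          linarith
        have key : (a:ℤ) * ((eE ((i*b) % a) - (n:ℤ)*(j:ℤ))
            + ((j:ℤ) - (((i*b/a : ℕ)):ℤ))*(n:ℤ))
            = (b:ℤ)*((((((i*b) % a)*(c'*A*n)) % a : ℕ):ℤ) - (n:ℤ)*(i:ℤ)) := by
          have h5 := haE ((i*b) % a)
          have h6 : ((i*b : ℕ):ℤ) = (i:ℤ)*(b:ℤ) := by push_cast; ring
          linear_combination h5 - (n:ℤ)*hdm - (n:ℤ)*h6
        have hco : IsCoprime ((b:ℤ)) ((a:ℤ)) := by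
          rw [Nat.isCoprime_iff_coprime]; exact cba
        exact hco.dvd_of_dvd_mul_left ⟨_, key⟩
      have hpair := emod_pair hbz _ _ hdvdsum
      have hcc := hcond i hi j hj
      simp only [hcc] at hpair
      linarith [hpair]
    rw [sum_congr rfl fun i hi => sum_congr rfl fun j hj => hpt i hi j hj]
    have hsub : ∑ i ∈ range a, ∑ j ∈ range r,
          ((if j = i*b/a then (0:ℤ) else (b:ℤ))
            - ((j:ℤ) - (((i*b/a : ℕ)):ℤ))*(n:ℤ) % (b:ℤ))
        = (∑ i ∈ range a, ∑ j ∈ range r,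
            (if j = i*b/a then (0:ℤ) else (b:ℤ)))
          - ∑ i ∈ range a, ∑ j ∈ range r,
              ((j:ℤ) - (((i*b/a : ℕ)):ℤ))*(n:ℤ) % (b:ℤ) := by
      rw [← sum_sub_distrib]
      exact sum_congr rfl fun i _ => by rw [← sum_sub_distrib]
    rw [hsub]
    have hone : ∀ i : ℕ, ∑ j ∈ range r, (if j = i*b/a then (0:ℤ) else (b:ℤ))
        = (r:ℤ)*(b:ℤ) - (if i*b/a < r then (b:ℤ) else 0) := by
      intro i
      have hflip : ∀ j : ℕ, (if j = i*b/a then (0:ℤ) else (b:ℤ))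
          = (b:ℤ) - (if j = i*b/a then (b:ℤ) else 0) := by
        intro j; split <;> ring
      rw [sum_congr rfl fun j _ => hflip j, sum_sub_distrib, sum_const, card_range,
        nsmul_eq_mul]
      have := Finset.sum_ite_eq' (range r) (i*b/a) (fun _ => (b:ℤ))
      rw [this]
      simp only [mem_range]
    rw [sum_congr rfl fun i _ => hone i, sum_sub_distrib, sum_const, card_range, nsmul_eq_mul]
    have hcount : ∑ i ∈ range a, (if i*b/a < r then (b:ℤ) else 0)
        = (b:ℤ)*((((r*a + b - 1)/b : ℕ)):ℤ) := by
      rw [← Finset.sum_filter]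
      rw [sum_const, nsmul_eq_mul]
      have hfc : (range a).filter (fun i => i*b/a < r)
          = (range a).filter (fun i => i*b < r*a) :=
        filter_congr fun i _ => by rw [Nat.div_lt_iff_lt_mul ha]
      rw [hfc, count_lemma a b r hb hrb]
      ring
    rw [hcount]
    ring
  rw [h1, hXsum, hWmod]
  have h4 := sum_id_cast r
  linear_combination (-(a:ℤ)*(n:ℤ))*h4
lemma sumS_val (A B N a b n : ℕ) (hB : 0 < B) (ha : 0 < a) (hb : 0 < b)
    (hg2 : Nat.Coprime (A*n) (B*a)) :
    2 * ∑ k ∈ range ((B*a)*N), ((k:ℤ)*((A:ℤ)*(b:ℤ)*(n:ℤ))) % ((B:ℤ)*(a:ℤ)*(b:ℤ))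
      = (N:ℤ)*((b:ℤ)*(((B:ℤ)*(a:ℤ))*((B:ℤ)*(a:ℤ) - 1))) := by
  have hBa : 0 < B*a := by positivity
  have hbz : (0:ℤ) < (b:ℤ) := by exact_mod_cast hb
  rw [sum_range_mul' (B*a) N]
  have hpt : ∀ j ∈ range N, ∀ x ∈ range (B*a),
      ((x + (B*a)*j : ℕ):ℤ)*((A:ℤ)*(b:ℤ)*(n:ℤ)) % ((B:ℤ)*(a:ℤ)*(b:ℤ))
      = (b:ℤ)*((((x*(A*n)) % (B*a) : ℕ)):ℤ) := by
    intro j _ x _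
    have e2 : ((x + (B*a)*j : ℕ):ℤ)*((A:ℤ)*(b:ℤ)*(n:ℤ))
        = (x:ℤ)*((A:ℤ)*(b:ℤ)*(n:ℤ)) + ((j*(A*n) : ℕ):ℤ)*((B:ℤ)*(a:ℤ)*(b:ℤ)) := by
      push_cast; ring
    rw [e2, Int.add_mul_emod_self_right]
    rw [show (x:ℤ)*((A:ℤ)*(b:ℤ)*(n:ℤ)) = (b:ℤ)*(((x*(A*n) : ℕ)):ℤ) from by push_cast; ring,
      show ((B:ℤ)*(a:ℤ)*(b:ℤ)) = (b:ℤ)*(((B*a : ℕ)):ℤ) from by push_cast; ring,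
      Int.mul_emod_mul_of_pos _ _ hbz]
    norm_cast
  rw [sum_congr rfl fun j hj => sum_congr rfl fun x hx => hpt j hj x hx]
  rw [sum_const, card_range, nsmul_eq_mul]
  rw [show ∑ x ∈ range (B*a), (b:ℤ)*((((x*(A*n)) % (B*a) : ℕ)):ℤ)
      = (b:ℤ) * ∑ x ∈ range (B*a), ((((x*(A*n)) % (B*a) : ℕ)):ℤ) from (mul_sum _ _ _).symm]
  rw [sum_bij_mod hBa hg2 (fun y => (y:ℤ))]
  have h := sum_id_cast (B*a)
  push_cast at h
  linear_combination (N:ℤ)*(b:ℤ)*h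
lemma E1_val (A a b n c' : ℕ) (ha : 0 < a)
    (hc' : (A*b*c') % a = 1 % a) (hcd : Nat.Coprime (c'*A*n) a) :
    2 * ∑ ρ ∈ range a, ((b:ℤ)*((((ρ*(c'*A*n)) % a : ℕ)):ℤ) - (n:ℤ)*(ρ:ℤ))/(a:ℤ)
      = ((b:ℤ) - (n:ℤ))*((a:ℤ) - 1) := by
  have haz : ((a:ℤ)) ≠ 0 := by exact_mod_cast ha.ne'
  have hc'' : A*b*c' ≡ 1 [MOD a] := hc'
  have hdvd : ∀ ρ : ℕ, ((a:ℤ)) ∣ ((b:ℤ)*((((ρ*(c'*A*n)) % a : ℕ)):ℤ) - (n:ℤ)*(ρ:ℤ)) := by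
    intro ρ
    have w1 : b*((ρ*(c'*A*n)) % a) ≡ n*ρ [MOD a] := by
      calc b*((ρ*(c'*A*n)) % a) ≡ b*(ρ*(c'*A*n)) [MOD a] :=
            (Nat.mod_modEq (ρ*(c'*A*n)) a).mul_left b
        _ = (n*ρ)*(A*b*c') := by ring
        _ ≡ (n*ρ)*1 [MOD a] := Nat.ModEq.mul_left _ hc''
        _ = n*ρ := mul_one _
    have h3 : ((b:ℤ)*((((ρ*(c'*A*n)) % a : ℕ)):ℤ) - (n:ℤ)*(ρ:ℤ))
        = -(((n*ρ : ℕ):ℤ) - ((b*((ρ*(c'*A*n)) % a) : ℕ):ℤ)) := by push_cast; ring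
    rw [h3]
    exact dvd_neg.mpr w1.dvd
  apply mul_left_cancel₀ haz
  have he : ∀ ρ : ℕ, (a:ℤ)*(((b:ℤ)*((((ρ*(c'*A*n)) % a : ℕ)):ℤ) - (n:ℤ)*(ρ:ℤ))/(a:ℤ))
      = (b:ℤ)*((((ρ*(c'*A*n)) % a : ℕ)):ℤ) - (n:ℤ)*(ρ:ℤ) :=
    fun ρ => Int.mul_ediv_cancel' (hdvd ρ)
  have hW : ∑ ρ ∈ range a, ((((ρ*(c'*A*n)) % a : ℕ)):ℤ) = ∑ ρ ∈ range a, (ρ:ℤ) :=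
    sum_bij_mod ha hcd (fun y => (y:ℤ))
  calc (a:ℤ) * (2 * ∑ ρ ∈ range a, ((b:ℤ)*((((ρ*(c'*A*n)) % a : ℕ)):ℤ) - (n:ℤ)*(ρ:ℤ))/(a:ℤ))
      = 2 * ((a:ℤ) * ∑ ρ ∈ range a,
          ((b:ℤ)*((((ρ*(c'*A*n)) % a : ℕ)):ℤ) - (n:ℤ)*(ρ:ℤ))/(a:ℤ)) := by ring
    _ = 2 * ∑ ρ ∈ range a,
          ((a:ℤ)*(((b:ℤ)*((((ρ*(c'*A*n)) % a : ℕ)):ℤ) - (n:ℤ)*(ρ:ℤ))/(a:ℤ))) := by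
        rw [mul_sum]
    _ = 2 * ∑ ρ ∈ range a, ((b:ℤ)*((((ρ*(c'*A*n)) % a : ℕ)):ℤ) - (n:ℤ)*(ρ:ℤ)) := by
        rw [sum_congr rfl fun ρ _ => he ρ]
    _ = 2 * ((b:ℤ)*(∑ ρ ∈ range a, ((((ρ*(c'*A*n)) % a : ℕ)):ℤ))
          - (n:ℤ)*(∑ ρ ∈ range a, (ρ:ℤ))) := by
        rw [sum_sub_distrib, ← mul_sum, ← mul_sum]
    _ = ((b:ℤ) - (n:ℤ))*(2 * ∑ ρ ∈ range a, (ρ:ℤ)) := by rw [hW]; ring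
    _ = ((b:ℤ) - (n:ℤ))*((a:ℤ)*((a:ℤ)-1)) := by rw [sum_id_cast]
    _ = (a:ℤ)*(((b:ℤ) - (n:ℤ))*((a:ℤ)-1)) := by ring
/-- Equation (11): the exact mean Age-of-Information of the basic model
over one period. -/
theorem stmt6 (A B N a b n : ℕ) (hA : 0 < A) (hB : 0 < B) (hN : 0 < N)
    (hapos : 0 < a) (hbpos : 0 < b) (hnpos : 0 < n)
    (ha : a = Nat.gcd (B * a * b) (N * a * n))
    (hb : b = Nat.gcd (A * b * n) (B * a * b))
    (hn : n = Nat.gcd (A * b * n) (N * a * n)) :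
    (1 / ((a : ℚ) * B * N)) *
        ∑ k ∈ Finset.Icc 1 (a * B * N),
          ((aoiBasic (A * b * n : ℤ) (B * a * b : ℤ) (N * a * n : ℤ) k : ℤ) : ℚ) =
      ((B : ℚ) * a * b + (N : ℚ) * a * n - n + (a : ℚ) * b) / 2 -
        ((b : ℚ) / N) *
          (((a : ℚ) * ((b : ℚ) + 1) / 2) * (⌊(N : ℚ) / (b : ℚ)⌋ : ℚ) +
            (⌈((N % b : ℕ) : ℚ) * (a : ℚ) / (b : ℚ)⌉ : ℚ) +
            ∑ i ∈ Finset.range a, ∑ j ∈ Finset.range (N % b),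
              (((((j : ℤ) - ⌊(i : ℚ) * (b : ℚ) / (a : ℚ)⌋) * (n : ℤ)) % (b : ℤ) : ℤ) : ℚ) /
                (b : ℚ)) := by
  -- ## coprimality facts
  have hg1 : Nat.Coprime (B*b) (N*n) := by
    have h : Nat.gcd (B*a*b) (N*a*n) = a * Nat.gcd (B*b) (N*n) := by
      rw [show B*a*b = a*(B*b) from by ring, show N*a*n = a*(N*n) from by ring,
        Nat.gcd_mul_left]
    have h2 : a * 1 = a * Nat.gcd (B*b) (N*n) := by rw [mul_one, ← h, ← ha]
    exact (Nat.eq_of_mul_eq_mul_left hapos h2).symm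
  have hg2 : Nat.Coprime (A*n) (B*a) := by
    have h : Nat.gcd (A*b*n) (B*a*b) = b * Nat.gcd (A*n) (B*a) := by
      rw [show A*b*n = b*(A*n) from by ring, show B*a*b = b*(B*a) from by ring,
        Nat.gcd_mul_left]
    have h2 : b * 1 = b * Nat.gcd (A*n) (B*a) := by rw [mul_one, ← h, ← hb]
    exact (Nat.eq_of_mul_eq_mul_left hbpos h2).symm
  have hg3 : Nat.Coprime (A*b) (N*a) := by
    have h : Nat.gcd (A*b*n) (N*a*n) = n * Nat.gcd (A*b) (N*a) := by
      rw [show A*b*n = n*(A*b) from by ring, show N*a*n = n*(N*a) from by ring,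
        Nat.gcd_mul_left]
    have h2 : n * 1 = n * Nat.gcd (A*b) (N*a) := by rw [mul_one, ← h, ← hn]
    exact (Nat.eq_of_mul_eq_mul_left hnpos h2).symm
  have cba : Nat.Coprime b a :=
    (Nat.Coprime.coprime_dvd_left (dvd_mul_left b A) hg3).coprime_dvd_right (dvd_mul_left a N)
  have cna : Nat.Coprime n a :=
    (Nat.Coprime.coprime_dvd_left (dvd_mul_left n A) hg2).coprime_dvd_right (dvd_mul_left a B)
  have cAa : Nat.Coprime A a :=
    (Nat.Coprime.coprime_dvd_left (dvd_mul_right A n) hg2).coprime_dvd_right (dvd_mul_left a B)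
  have cnb : Nat.Coprime n b :=
    (Nat.Coprime.coprime_dvd_left (dvd_mul_left n N) hg1.symm).coprime_dvd_right
      (dvd_mul_left b B)
  have cNB : Nat.Coprime N B :=
    (Nat.Coprime.coprime_dvd_left (dvd_mul_right N n) hg1.symm).coprime_dvd_right
      (dvd_mul_right B b)
  have cAB : Nat.Coprime A B :=
    (Nat.Coprime.coprime_dvd_left (dvd_mul_right A n) hg2).coprime_dvd_right (dvd_mul_right B a)
  have cnB : Nat.Coprime n B :=
    (Nat.Coprime.coprime_dvd_left (dvd_mul_left n N) hg1.symm).coprime_dvd_right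
      (dvd_mul_right B b)
  have cNAnB : Nat.Coprime (N*A*n) B := (cNB.mul cAB).mul cnB
  have cAb_a : Nat.Coprime (A*b) a := cAa.mul cba
  obtain ⟨c', hc'⟩ := exists_inv cAb_a
  have hc'2 : (A*b*c') % a = 1 % a := hc'
  have cc'a : Nat.Coprime c' a := by
    have hmc : c' * (A*b) ≡ 1 [MOD a] := by
      rw [show c'*(A*b) = A*b*c' from by ring]; exact hc'2
    exact Nat.coprime_of_mul_modEq_one (A*b) hmc
  have cd_a : Nat.Coprime (c'*A*n) a := (cc'a.mul cAa).mul cna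
  -- ## setup
  set q := N / b with hqdef
  set r := N % b with hrdef
  have hN_decomp : N = b*q + r := (Nat.div_add_mod N b).symm
  have hrb : r < b := Nat.mod_lt _ hbpos
  -- ## the integer sums
  have h0 : aoiBasic ((A:ℤ)*b*n) ((B:ℤ)*a*b) ((N:ℤ)*a*n) 0 = 0 := by simp [aoiBasic]
  have hPzero : aoiBasic ((A:ℤ)*b*n) ((B:ℤ)*a*b) ((N:ℤ)*a*n) (a*B*N) = 0 := by
    have d1 : ((((a*B*N : ℕ)):ℤ)*((A:ℤ)*b*n)) % ((N:ℤ)*a*n) = 0 :=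
      Int.emod_eq_zero_of_dvd ⟨(A:ℤ)*(B:ℤ)*(b:ℤ), by push_cast; ring⟩
    have d2 : ((((a*B*N : ℕ)):ℤ)*((A:ℤ)*b*n)) % ((B:ℤ)*a*b) = 0 :=
      Int.emod_eq_zero_of_dvd ⟨(A:ℤ)*(n:ℤ)*(N:ℤ), by push_cast; ring⟩
    show ((((a*B*N : ℕ)):ℤ)*((A:ℤ)*b*n)) % ((N:ℤ)*a*n)
        + (((((a*B*N : ℕ)):ℤ)*((A:ℤ)*b*n)) % ((B:ℤ)*a*b)
          - ((((a*B*N : ℕ)):ℤ)*((A:ℤ)*b*n)) % ((N:ℤ)*a*n)) % ((B:ℤ)*a*b) = 0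
    rw [d1, d2]
    simp
  have hIcc : ∑ k ∈ Finset.Icc 1 (a*B*N), aoiBasic ((A:ℤ)*b*n) ((B:ℤ)*a*b) ((N:ℤ)*a*n) k
      = ∑ k ∈ range (a*B*N), aoiBasic ((A:ℤ)*b*n) ((B:ℤ)*a*b) ((N:ℤ)*a*n) k := by
    have hins : range (a*B*N + 1) = insert 0 (Finset.Icc 1 (a*B*N)) := by
      ext x
      simp only [mem_range, Finset.mem_insert, Finset.mem_Icc]
      omega
    have e1 : ∑ k ∈ range (a*B*N + 1), aoiBasic ((A:ℤ)*b*n) ((B:ℤ)*a*b) ((N:ℤ)*a*n) k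
        = aoiBasic ((A:ℤ)*b*n) ((B:ℤ)*a*b) ((N:ℤ)*a*n) 0
          + ∑ k ∈ Finset.Icc 1 (a*B*N), aoiBasic ((A:ℤ)*b*n) ((B:ℤ)*a*b) ((N:ℤ)*a*n) k := by
      rw [hins, sum_insert (by simp)]
    have e2 := Finset.sum_range_succ
      (aoiBasic ((A:ℤ)*b*n) ((B:ℤ)*a*b) ((N:ℤ)*a*n)) (a*B*N)
    rw [h0] at e1
    rw [hPzero] at e2
    linarith [e1, e2]
  have haoi : ∀ k : ℕ, aoiBasic ((A:ℤ)*b*n) ((B:ℤ)*a*b) ((N:ℤ)*a*n) k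
      = ((k:ℤ)*((A:ℤ)*b*n)) % ((B:ℤ)*a*b)
        - ((B:ℤ)*a*b)*((((k:ℤ)*((A:ℤ)*b*n)) % ((B:ℤ)*a*b)
            - ((k:ℤ)*((A:ℤ)*b*n)) % ((N:ℤ)*a*n))/((B:ℤ)*a*b)) := by
    intro k
    show ((k:ℤ)*((A:ℤ)*b*n)) % ((N:ℤ)*a*n)
        + (((k:ℤ)*((A:ℤ)*b*n)) % ((B:ℤ)*a*b) - ((k:ℤ)*((A:ℤ)*b*n)) % ((N:ℤ)*a*n))
            % ((B:ℤ)*a*b) = _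
    rw [Int.emod_def (((k:ℤ)*((A:ℤ)*b*n)) % ((B:ℤ)*a*b)
      - ((k:ℤ)*((A:ℤ)*b*n)) % ((N:ℤ)*a*n)) ((B:ℤ)*a*b)]
    ring
  have hSsplit : ∑ k ∈ range (a*B*N), aoiBasic ((A:ℤ)*b*n) ((B:ℤ)*a*b) ((N:ℤ)*a*n) k
      = (∑ k ∈ range (a*B*N), ((k:ℤ)*((A:ℤ)*b*n)) % ((B:ℤ)*a*b))
        - ((B:ℤ)*a*b) * ∑ k ∈ range (a*B*N),
            ((((k:ℤ)*((A:ℤ)*b*n)) % ((B:ℤ)*a*b)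
              - ((k:ℤ)*((A:ℤ)*b*n)) % ((N:ℤ)*a*n))/((B:ℤ)*a*b)) := by
    rw [sum_congr rfl fun k _ => haoi k, sum_sub_distrib, ← mul_sum]
  have hSSv : 2 * ∑ k ∈ range (a*B*N), ((k:ℤ)*((A:ℤ)*b*n)) % ((B:ℤ)*a*b)
      = (N:ℤ)*((b:ℤ)*(((B:ℤ)*(a:ℤ))*((B:ℤ)*(a:ℤ) - 1))) := by
    rw [show a*B*N = (B*a)*N from by ring]
    exact sumS_val A B N a b n hB hapos hbpos hg2
  have hTv : ∑ k ∈ range (a*B*N),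
        ((((k:ℤ)*((A:ℤ)*b*n)) % ((B:ℤ)*a*b)
          - ((k:ℤ)*((A:ℤ)*b*n)) % ((N:ℤ)*a*n))/((B:ℤ)*a*b))
      = ∑ m ∈ range N, ∑ ρ ∈ range a,
          (((b:ℤ)*((((ρ*(c'*A*n)) % a : ℕ)):ℤ) - (n:ℤ)*(ρ:ℤ))/(a:ℤ) - (n:ℤ)*(m:ℤ))/(b:ℤ) := by
    rw [show a*B*N = (N*a)*B from by ring]
    exact sumT_val A B N a b n c' hA hB hN hapos hbpos hnpos hc'2 hg3 cNAnB
  have hT2 : 2 * ∑ m ∈ range N, ∑ ρ ∈ range a,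
        (((b:ℤ)*((((ρ*(c'*A*n)) % a : ℕ)):ℤ) - (n:ℤ)*(ρ:ℤ))/(a:ℤ) - (n:ℤ)*(m:ℤ))/(b:ℤ)
      = 2*(q:ℤ)*(∑ ρ ∈ range a,
            ((b:ℤ)*((((ρ*(c'*A*n)) % a : ℕ)):ℤ) - (n:ℤ)*(ρ:ℤ))/(a:ℤ))
        + (a:ℤ)*(2*(q:ℤ)*(1-(b:ℤ)) - (q:ℤ)*((n:ℤ)-1)*((b:ℤ)-1) - (n:ℤ)*(b:ℤ)*(q:ℤ)*((q:ℤ)-1))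
        + 2*(∑ ρ ∈ range a, ∑ j ∈ range r,
            (((b:ℤ)*((((ρ*(c'*A*n)) % a : ℕ)):ℤ) - (n:ℤ)*(ρ:ℤ))/(a:ℤ) - (n:ℤ)*(j:ℤ))/(b:ℤ))
        - (a:ℤ)*(2*(r:ℤ)*(n:ℤ)*(q:ℤ)) := by
    rw [Finset.sum_comm, mul_sum]
    rw [sum_congr rfl fun ρ _ => sumM hbpos cnb hN_decomp
      (((b:ℤ)*((((ρ*(c'*A*n)) % a : ℕ)):ℤ) - (n:ℤ)*(ρ:ℤ))/(a:ℤ))]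
    simp only [sum_add_distrib, sum_sub_distrib, sum_const, card_range, nsmul_eq_mul]
    rw [← mul_sum, ← mul_sum]
    ring
  have hE1 := E1_val A a b n c' hapos hc'2 cd_a
  have hJ := J_val A a b n r c' hapos hbpos hnpos hrb hc'2 cba cnb
  -- ## convert the goal
  have hb0 : ((b:ℚ)) ≠ 0 := by exact_mod_cast hbpos.ne'
  have ha0 : ((a:ℚ)) ≠ 0 := by exact_mod_cast hapos.ne'
  have hB0 : ((B:ℚ)) ≠ 0 := by exact_mod_cast hB.ne'
  have hN0 : ((N:ℚ)) ≠ 0 := by exact_mod_cast hN.ne'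
  have hcastsum : ∑ k ∈ Finset.Icc 1 (a*B*N),
        ((aoiBasic ((A:ℤ)*b*n) ((B:ℤ)*a*b) ((N:ℤ)*a*n) k : ℤ) : ℚ)
      = (((∑ k ∈ Finset.Icc 1 (a*B*N),
          aoiBasic ((A:ℤ)*b*n) ((B:ℤ)*a*b) ((N:ℤ)*a*n) k) : ℤ) : ℚ) := by
    push_cast
    rfl
  rw [hcastsum]
  rw [show ⌊(N : ℚ) / (b : ℚ)⌋ = ((q:ℕ):ℤ) from floor_cast N b]
  rw [show ((N % b : ℕ) : ℚ) * (a : ℚ) = ((r*a : ℕ) : ℚ) from by push_cast; ring]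
  rw [ceil_cast (r*a) b hbpos]
  have hfloori : ∀ i : ℕ, ⌊(i : ℚ) * (b : ℚ) / (a : ℚ)⌋ = (((i*b/a : ℕ)):ℤ) := by
    intro i
    rw [show (i : ℚ) * (b : ℚ) = ((i*b : ℕ) : ℚ) from by push_cast; ring]
    exact floor_cast (i*b) a
  rw [sum_congr rfl fun i _ => sum_congr rfl fun j _ => by rw [hfloori i]]
  have hDsum : ∑ i ∈ range a, ∑ j ∈ range r,
        ((((((j : ℤ) - (((i*b/a : ℕ)):ℤ)) * (n : ℤ)) % (b : ℤ) : ℤ)) : ℚ) / (b : ℚ)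
      = (((∑ i ∈ range a, ∑ j ∈ range r,
          ((j:ℤ) - (((i*b/a : ℕ)):ℤ))*(n:ℤ) % (b:ℤ)) : ℤ) : ℚ) / (b : ℚ) := by
    calc ∑ i ∈ range a, ∑ j ∈ range r,
          ((((((j : ℤ) - (((i*b/a : ℕ)):ℤ)) * (n : ℤ)) % (b : ℤ) : ℤ)) : ℚ) / (b : ℚ)
        = ∑ i ∈ range a, (((∑ j ∈ range r,
            ((j:ℤ) - (((i*b/a : ℕ)):ℤ))*(n:ℤ) % (b:ℤ) : ℤ)) : ℚ) / (b : ℚ) := by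
          refine sum_congr rfl fun i _ => ?_
          rw [← sum_div]
          norm_cast
      _ = _ := by
          rw [← sum_div]
          norm_cast
  rw [hDsum]
  have hNq : (N:ℚ) = (b:ℚ)*(q:ℚ) + (r:ℚ) := by exact_mod_cast hN_decomp
  rw [hNq]
  simp only [Int.cast_natCast]
  -- ## build the ℚ hypotheses
  have q1 : (((∑ k ∈ Finset.Icc 1 (a*B*N),
        aoiBasic ((A:ℤ)*b*n) ((B:ℤ)*a*b) ((N:ℤ)*a*n) k) : ℤ) : ℚ)
      = (((∑ k ∈ range (a*B*N), ((k:ℤ)*((A:ℤ)*b*n)) % ((B:ℤ)*a*b)) : ℤ) : ℚ)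
        - ((B:ℚ)*(a:ℚ)*(b:ℚ))*(((∑ k ∈ range (a*B*N),
            ((((k:ℤ)*((A:ℤ)*b*n)) % ((B:ℤ)*a*b)
              - ((k:ℤ)*((A:ℤ)*b*n)) % ((N:ℤ)*a*n))/((B:ℤ)*a*b))) : ℤ) : ℚ) := by
    rw [hIcc, hSsplit]
    push_cast
    ring
  have q2 : 2 * (((∑ k ∈ range (a*B*N), ((k:ℤ)*((A:ℤ)*b*n)) % ((B:ℤ)*a*b)) : ℤ) : ℚ)
      = ((b:ℚ)*(q:ℚ)+(r:ℚ))*(b:ℚ)*((B:ℚ)*(a:ℚ))*((B:ℚ)*(a:ℚ)-1) := by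
    have hc : 2 * (((∑ k ∈ range (a*B*N), ((k:ℤ)*((A:ℤ)*b*n)) % ((B:ℤ)*a*b)) : ℤ) : ℚ)
        = (N:ℚ)*((b:ℚ)*(((B:ℚ)*(a:ℚ))*((B:ℚ)*(a:ℚ) - 1))) := by exact_mod_cast hSSv
    rw [hNq] at hc
    linear_combination hc
  have q3 : 2 * (((∑ k ∈ range (a*B*N),
        ((((k:ℤ)*((A:ℤ)*b*n)) % ((B:ℤ)*a*b)
          - ((k:ℤ)*((A:ℤ)*b*n)) % ((N:ℤ)*a*n))/((B:ℤ)*a*b))) : ℤ) : ℚ)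
      = 2*(q:ℚ)*(((∑ ρ ∈ range a,
            ((b:ℤ)*((((ρ*(c'*A*n)) % a : ℕ)):ℤ) - (n:ℤ)*(ρ:ℤ))/(a:ℤ)) : ℤ) : ℚ)
        + (a:ℚ)*(2*(q:ℚ)*(1-(b:ℚ)) - (q:ℚ)*((n:ℚ)-1)*((b:ℚ)-1) - (n:ℚ)*(b:ℚ)*(q:ℚ)*((q:ℚ)-1))
        + 2*(((∑ ρ ∈ range a, ∑ j ∈ range r,
            (((b:ℤ)*((((ρ*(c'*A*n)) % a : ℕ)):ℤ) - (n:ℤ)*(ρ:ℤ))/(a:ℤ)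
              - (n:ℤ)*(j:ℤ))/(b:ℤ)) : ℤ) : ℚ)
        - (a:ℚ)*(2*(r:ℚ)*(n:ℚ)*(q:ℚ)) := by
    have hz := hT2
    rw [← hTv] at hz
    exact_mod_cast hz
  have q4 : 2 * (((∑ ρ ∈ range a,
        ((b:ℤ)*((((ρ*(c'*A*n)) % a : ℕ)):ℤ) - (n:ℤ)*(ρ:ℤ))/(a:ℤ)) : ℤ) : ℚ)
      = ((b:ℚ)-(n:ℚ))*((a:ℚ)-1) := by
    exact_mod_cast hE1
  have q5 : 2*(b:ℚ)*(((∑ ρ ∈ range a, ∑ j ∈ range r,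
        (((b:ℤ)*((((ρ*(c'*A*n)) % a : ℕ)):ℤ) - (n:ℤ)*(ρ:ℤ))/(a:ℤ)
          - (n:ℤ)*(j:ℤ))/(b:ℤ)) : ℤ) : ℚ)
      = 2*(r:ℚ)*(((∑ ρ ∈ range a,
            ((b:ℤ)*((((ρ*(c'*A*n)) % a : ℕ)):ℤ) - (n:ℤ)*(ρ:ℤ))/(a:ℤ)) : ℤ) : ℚ)
        - (a:ℚ)*(n:ℚ)*(r:ℚ)*((r:ℚ)-1)
        - 2*(b:ℚ)*((a:ℚ)*(r:ℚ) - ((((r*a + b - 1)/b : ℕ)):ℚ))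
        + 2*(((∑ i ∈ range a, ∑ j ∈ range r,
            ((j:ℤ) - (((i*b/a : ℕ)):ℤ))*(n:ℤ) % (b:ℤ)) : ℤ) : ℚ) := by
    exact_mod_cast hJ
  have hNQ0 : ((b:ℚ)*(q:ℚ) + (r:ℚ)) ≠ 0 := by rw [← hNq]; exact hN0
  have key := final_assembly (a:ℚ) (b:ℚ) (n:ℚ) (B:ℚ) (q:ℚ) (r:ℚ)
    ((((r*a + b - 1)/b : ℕ)):ℚ)
    (((∑ i ∈ range a, ∑ j ∈ range r, ((j:ℤ) - (((i*b/a : ℕ)):ℤ))*(n:ℤ) % (b:ℤ)) : ℤ) : ℚ)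
    (((∑ ρ ∈ range a, ((b:ℤ)*((((ρ*(c'*A*n)) % a : ℕ)):ℤ) - (n:ℤ)*(ρ:ℤ))/(a:ℤ)) : ℤ) : ℚ)
    (((∑ ρ ∈ range a, ∑ j ∈ range r,
        (((b:ℤ)*((((ρ*(c'*A*n)) % a : ℕ)):ℤ) - (n:ℤ)*(ρ:ℤ))/(a:ℤ)
          - (n:ℤ)*(j:ℤ))/(b:ℤ)) : ℤ) : ℚ)
    (((∑ k ∈ range (a*B*N),
        ((((k:ℤ)*((A:ℤ)*b*n)) % ((B:ℤ)*a*b)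
          - ((k:ℤ)*((A:ℤ)*b*n)) % ((N:ℤ)*a*n))/((B:ℤ)*a*b))) : ℤ) : ℚ)
    (((∑ k ∈ range (a*B*N), ((k:ℤ)*((A:ℤ)*b*n)) % ((B:ℤ)*a*b)) : ℤ) : ℚ)
    (((∑ k ∈ Finset.Icc 1 (a*B*N),
        aoiBasic ((A:ℤ)*b*n) ((B:ℤ)*a*b) ((N:ℤ)*a*n) k) : ℤ) : ℚ)
    ha0 hb0 hB0 hNQ0 q1 q2 q3 q4 q5
  linear_combination key
end

section
/- In the basic model, the mean Age-of-Information over one period is sandwiched as follows: (B' + N' − n − a·b)/2 ≤ (1/(aBN))·Σ_{k=1}^{aBN} α_k ≤ (B' + N' − n + a·b)/2. -/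
/-- Sum over `range m` of a function `ZMod m → M` equals the sum over the whole `ZMod m`. -/
lemma aux_sum_range_zmod {M : Type*} [AddCommMonoid M] (m : ℕ) [NeZero m] (f : ZMod m → M) :
    ∑ j ∈ Finset.range m, f (j : ZMod m) = ∑ z : ZMod m, f z := by
  apply Finset.sum_nbij' (i := fun j : ℕ => (j : ZMod m)) (j := fun z : ZMod m => z.val)
  · intro a _; exact Finset.mem_univ _
  · intro z _; exact Finset.mem_range.2 (ZMod.val_lt z)
  · intro a ha; exact ZMod.val_natCast_of_lt (Finset.mem_range.1 ha)
  · intro z _; exact ZMod.natCast_rightInverse z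
  · intro a _; rfl

/-- Equidistribution of an arithmetic progression with step coprime to the modulus. -/
lemma aux_sum_emod (u : ℤ) (e m : ℕ) (hm : 0 < m) (hcop : Nat.Coprime e m) :
    ∑ j ∈ Finset.range m, (u + (j : ℤ) * e) % (m : ℤ) = ∑ j ∈ Finset.range m, (j : ℤ) := by
  haveI : NeZero m := ⟨hm.ne'⟩
  have h1 : ∀ j : ℕ, (u + (j : ℤ) * e) % (m : ℤ)
      = ((((u : ZMod m) + (j : ZMod m) * (e : ZMod m)).val : ℕ) : ℤ) := by
    intro j
    have := ZMod.val_intCast (n := m) (u + (j : ℤ) * e)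
    rw [← this]
    push_cast
    ring_nf
  calc ∑ j ∈ Finset.range m, (u + (j : ℤ) * e) % (m : ℤ)
      = ∑ j ∈ Finset.range m,
        ((((u : ZMod m) + (j : ZMod m) * (e : ZMod m)).val : ℕ) : ℤ) := by
        exact Finset.sum_congr rfl fun j _ => h1 j
    _ = ∑ z : ZMod m, ((((u : ZMod m) + z * (e : ZMod m)).val : ℕ) : ℤ) :=
        aux_sum_range_zmod m (fun z => ((((u : ZMod m) + z * (e : ZMod m)).val : ℕ) : ℤ))
    _ = ∑ z : ZMod m, ((z.val : ℕ) : ℤ) := by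
        have hunit : IsUnit (e : ZMod m) := (ZMod.unitOfCoprime e hcop).isUnit
        have hinj : Function.Injective (fun z : ZMod m => (u : ZMod m) + z * (e : ZMod m)) := by
          intro z1 z2 h
          simp only [add_right_inj] at h
          exact hunit.mul_left_injective h
        have hbij : Function.Bijective
            (fun z : ZMod m => (u : ZMod m) + z * (e : ZMod m)) :=
          (Finite.injective_iff_bijective).1 hinj
        exact Function.Bijective.sum_comp hbij (fun z : ZMod m => ((z.val : ℕ) : ℤ))
    _ = ∑ j ∈ Finset.range m, ((j : ℕ) : ℤ) := by
        rw [← aux_sum_range_zmod m (fun z : ZMod m => ((z.val : ℕ) : ℤ))]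
        exact Finset.sum_congr rfl fun j hj => by
          rw [ZMod.val_natCast_of_lt (Finset.mem_range.1 hj)]

/-- The key inner sum computation. -/
lemma aux_inner_sum (x : ℤ) (c e B : ℕ) (hc : 0 < c) (hB : 0 < B) (hcop : Nat.Coprime e B) :
    ∑ j ∈ Finset.range B, (x + (j : ℤ) * ((c : ℤ) * e)) % ((c : ℤ) * B)
      = (B : ℤ) * (x % c) + (c : ℤ) * ∑ j ∈ Finset.range B, (j : ℤ) := by
  have hcZ : (0 : ℤ) < (c : ℤ) := by exact_mod_cast hc
  have hBZ : (0 : ℤ) < (B : ℤ) := by exact_mod_cast hB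
  have hterm : ∀ j : ℕ, (x + (j : ℤ) * ((c : ℤ) * e)) % ((c : ℤ) * B)
      = x % c + (c : ℤ) * ((x / c + (j : ℤ) * e) % (B : ℤ)) := by
    intro j
    set u : ℤ := x / c with hu
    set v : ℤ := x % c with hv
    have hx : (c : ℤ) * u + v = x := Int.mul_ediv_add_emod x c
    set w : ℤ := u + (j : ℤ) * e with hw
    have hrw : x + (j : ℤ) * ((c : ℤ) * e)
        = ((c : ℤ) * (w % B) + v) + ((c : ℤ) * B) * (w / B) := by
      have h := Int.mul_ediv_add_emod w (B : ℤ)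
      linear_combination (-(1 : ℤ)) * hx + (-(c : ℤ)) * h
    rw [hrw, Int.add_mul_emod_self_left]
    have hv0 : 0 ≤ v := Int.emod_nonneg x hcZ.ne'
    have hv1 : v < c := Int.emod_lt_of_pos x hcZ
    have hw0 : 0 ≤ w % B := Int.emod_nonneg w hBZ.ne'
    have hw1 : w % B < B := Int.emod_lt_of_pos w hBZ
    have heq : ((c : ℤ) * (w % B) + v) % ((c : ℤ) * B) = (c : ℤ) * (w % B) + v :=
      Int.emod_eq_of_lt (add_nonneg (mul_nonneg hcZ.le hw0) hv0)
        (by nlinarith [mul_le_mul_of_nonneg_left (by linarith : w % (B : ℤ) ≤ (B : ℤ) - 1) hcZ.le])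
    rw [heq, hw, hu, hv]
    ring
  calc ∑ j ∈ Finset.range B, (x + (j : ℤ) * ((c : ℤ) * e)) % ((c : ℤ) * B)
      = ∑ j ∈ Finset.range B, (x % c + (c : ℤ) * ((x / c + (j : ℤ) * e) % (B : ℤ))) :=
        Finset.sum_congr rfl fun j _ => hterm j
    _ = (B : ℤ) * (x % c) + (c : ℤ) * ∑ j ∈ Finset.range B, ((x / c + (j : ℤ) * e) % (B : ℤ)) := by
        rw [Finset.sum_add_distrib, Finset.sum_const, Finset.card_range, ← Finset.mul_sum]
        ring
    _ = (B : ℤ) * (x % c) + (c : ℤ) * ∑ j ∈ Finset.range B, (j : ℤ) := by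
        rw [aux_sum_emod (x / c) e B hB hcop]

/-- Decomposition of an interval sum into blocks. -/
lemma aux_sum_decompose {M : Type*} [AddCommMonoid M] (f : ℕ → M) (d B : ℕ) (hd : 0 < d) :
    ∑ k ∈ Finset.Icc 1 (d * B), f k
      = ∑ i ∈ Finset.range d, ∑ j ∈ Finset.range B, f (i + 1 + j * d) := by
  rw [← Finset.sum_product']
  apply Finset.sum_nbij' (i := fun k : ℕ => ((k - 1) % d, (k - 1) / d))
    (j := fun p : ℕ × ℕ => p.1 + 1 + p.2 * d)
  · intro k hk
    rw [Finset.mem_Icc] at hk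
    refine Finset.mem_product.2 ⟨Finset.mem_range.2 (Nat.mod_lt _ hd), Finset.mem_range.2 ?_⟩
    rw [Nat.div_lt_iff_lt_mul hd]
    calc k - 1 < d * B := by omega
      _ = B * d := Nat.mul_comm d B
  · intro p hp
    rw [Finset.mem_product, Finset.mem_range, Finset.mem_range] at hp
    rw [Finset.mem_Icc]
    have h4 : p.2 * d + d ≤ B * d := by
      have h5 : (p.2 + 1) * d ≤ B * d := Nat.mul_le_mul_right d hp.2
      calc p.2 * d + d = (p.2 + 1) * d := by ring
        _ ≤ B * d := h5
    have hc : B * d = d * B := Nat.mul_comm B d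
    omega
  · intro k hk
    rw [Finset.mem_Icc] at hk
    show (k - 1) % d + 1 + (k - 1) / d * d = k
    have h := Nat.mod_add_div (k - 1) d
    have h2 : (k - 1) / d * d = d * ((k - 1) / d) := Nat.mul_comm _ _
    omega
  · intro p hp
    rw [Finset.mem_product, Finset.mem_range, Finset.mem_range] at hp
    show ((p.1 + 1 + p.2 * d - 1) % d, (p.1 + 1 + p.2 * d - 1) / d) = p
    have h1 : (p.1 + 1 + p.2 * d) - 1 = p.1 + p.2 * d := by omega
    rw [h1, Nat.add_mul_mod_self_right, Nat.add_mul_div_right _ _ hd,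
      Nat.mod_eq_of_lt hp.1, Nat.div_eq_of_lt hp.1, Nat.zero_add]
  · intro k hk
    rw [Finset.mem_Icc] at hk
    show f k = f ((k - 1) % d + 1 + (k - 1) / d * d)
    have h := Nat.mod_add_div (k - 1) d
    have h2 : (k - 1) / d * d = d * ((k - 1) / d) := Nat.mul_comm _ _
    have h3 : (k - 1) % d + 1 + (k - 1) / d * d = k := by omega
    rw [h3]

/-- Corollary 1, eq. (12): in the basic model the mean AoI over one period is
sandwiched between `(B' + N' − n − a·b)/2` and `(B' + N' − n + a·b)/2`. -/
theorem stmt7 (A B N a b n : ℕ) (hA : 0 < A) (hB : 0 < B) (hN : 0 < N)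
    (hapos : 0 < a) (hbpos : 0 < b) (hnpos : 0 < n)
    (ha : a = Nat.gcd (B * a * b) (N * a * n))
    (hb : b = Nat.gcd (A * b * n) (B * a * b))
    (hn : n = Nat.gcd (A * b * n) (N * a * n)) :
    ((B : ℚ) * a * b + (N : ℚ) * a * n - n - (a : ℚ) * b) / 2 ≤
        (1 / ((a : ℚ) * B * N)) *
          ∑ k ∈ Finset.Icc 1 (a * B * N),
            ((aoiBasic (A * b * n : ℤ) (B * a * b : ℤ) (N * a * n : ℤ) k : ℤ) : ℚ) ∧
      (1 / ((a : ℚ) * B * N)) *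
          ∑ k ∈ Finset.Icc 1 (a * B * N),
            ((aoiBasic (A * b * n : ℤ) (B * a * b : ℤ) (N * a * n : ℤ) k : ℤ) : ℚ) ≤
        ((B : ℚ) * a * b + (N : ℚ) * a * n - n + (a : ℚ) * b) / 2 := by
  set A' : ℤ := (A : ℤ) * b * n with hA'
  set B' : ℤ := (B : ℤ) * a * b with hB'
  set N' : ℤ := (N : ℤ) * a * n with hN'
  -- coprimality facts
  have hgcd1 : Nat.Coprime (A * b) (N * a) := by
    have h1 : A * b * n = n * (A * b) := by ring
    have h2 : N * a * n = n * (N * a) := by ring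
    rw [h1, h2, Nat.gcd_mul_left] at hn
    have h3 : n * Nat.gcd (A * b) (N * a) = n * 1 := by rw [mul_one]; exact hn.symm
    exact Nat.eq_of_mul_eq_mul_left hnpos h3
  have hgcd2 : Nat.Coprime (A * n) (B * a) := by
    have h1 : A * b * n = b * (A * n) := by ring
    have h2 : B * a * b = b * (B * a) := by ring
    rw [h1, h2, Nat.gcd_mul_left] at hb
    have h3 : b * Nat.gcd (A * n) (B * a) = b * 1 := by rw [mul_one]; exact hb.symm
    exact Nat.eq_of_mul_eq_mul_left hbpos h3
  have hgcd3 : Nat.Coprime (B * b) (N * n) := by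
    have h1 : B * a * b = a * (B * b) := by ring
    have h2 : N * a * n = a * (N * n) := by ring
    rw [h1, h2, Nat.gcd_mul_left] at ha
    have h3 : a * Nat.gcd (B * b) (N * n) = a * 1 := by rw [mul_one]; exact ha.symm
    exact Nat.eq_of_mul_eq_mul_left hapos h3
  have cA : Nat.Coprime A B :=
    Nat.Coprime.coprime_dvd_right (dvd_mul_right B a)
      (Nat.Coprime.coprime_dvd_left (dvd_mul_right A n) hgcd2)
  have cn : Nat.Coprime n B :=
    Nat.Coprime.coprime_dvd_right (dvd_mul_right B a)
      (Nat.Coprime.coprime_dvd_left (dvd_mul_left n A) hgcd2)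
  have cN : Nat.Coprime N B :=
    Nat.Coprime.coprime_dvd_right (dvd_mul_right B b)
      (Nat.Coprime.coprime_dvd_left (dvd_mul_right N n) hgcd3.symm)
  have cE : Nat.Coprime (A * N * n) B := Nat.Coprime.mul (Nat.Coprime.mul cA cN) cn
  -- basic rewriting of aoiBasic
  have hsub : ∀ y z : ℤ, (y % B' - z) % B' = (y - z) % B' := by
    intro y z
    rw [Int.sub_emod (y % B') z, Int.emod_emod_of_dvd y dvd_rfl, ← Int.sub_emod]
  have expand : ∀ k : ℕ, aoiBasic A' B' N' k
      = ((k : ℤ) * A') % N' + (((k : ℤ) * A') - ((k : ℤ) * A') % N') % B' := by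
    intro k
    unfold aoiBasic
    rw [hsub]
  -- the inner-block sum
  have key : ∀ i : ℕ, ∑ j ∈ Finset.range B, aoiBasic A' B' N' (i + 1 + j * (N * a))
      = (B : ℤ) * (((i + 1 : ℕ) : ℤ) * A' % N')
        + ((B : ℤ) * (((((i + 1 : ℕ) : ℤ) * A') - ((i + 1 : ℕ) : ℤ) * A' % N') % ((a * b : ℕ) : ℤ))
           + ((a * b : ℕ) : ℤ) * ∑ j ∈ Finset.range B, (j : ℤ)) := by
    intro i
    have h1 : ∀ j : ℕ, aoiBasic A' B' N' (i + 1 + j * (N * a))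
        = (((i + 1 : ℕ) : ℤ) * A') % N'
          + (((((i + 1 : ℕ) : ℤ) * A') - ((i + 1 : ℕ) : ℤ) * A' % N')
              + (j : ℤ) * (((a * b : ℕ) : ℤ) * ((A * N * n : ℕ) : ℤ)))
            % (((a * b : ℕ) : ℤ) * (B : ℤ)) := by
      intro j
      rw [expand]
      have hidx : ((i + 1 + j * (N * a) : ℕ) : ℤ) * A'
          = ((i + 1 : ℕ) : ℤ) * A' + N' * ((j : ℤ) * ((A : ℤ) * (b : ℤ))) := by
        rw [hA', hN']; push_cast; ring
      rw [hidx, Int.add_mul_emod_self_left]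
      congr 1
      have hc1 : N' * ((j : ℤ) * ((A : ℤ) * (b : ℤ)))
          = (j : ℤ) * (((a * b : ℕ) : ℤ) * ((A * N * n : ℕ) : ℤ)) := by
        rw [hN']; push_cast; ring
      have h2 : (((i + 1 : ℕ) : ℤ) * A' + N' * ((j : ℤ) * ((A : ℤ) * (b : ℤ))))
            - ((i + 1 : ℕ) : ℤ) * A' % N'
          = ((((i + 1 : ℕ) : ℤ) * A') - ((i + 1 : ℕ) : ℤ) * A' % N')
              + (j : ℤ) * (((a * b : ℕ) : ℤ) * ((A * N * n : ℕ) : ℤ)) := by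
        linear_combination hc1
      have h3 : B' = ((a * b : ℕ) : ℤ) * (B : ℤ) := by rw [hB']; push_cast; ring
      rw [h2, h3]
    calc ∑ j ∈ Finset.range B, aoiBasic A' B' N' (i + 1 + j * (N * a))
        = ∑ j ∈ Finset.range B, ((((i + 1 : ℕ) : ℤ) * A') % N'
            + (((((i + 1 : ℕ) : ℤ) * A') - ((i + 1 : ℕ) : ℤ) * A' % N')
                + (j : ℤ) * (((a * b : ℕ) : ℤ) * ((A * N * n : ℕ) : ℤ)))
              % (((a * b : ℕ) : ℤ) * (B : ℤ))) := Finset.sum_congr rfl fun j _ => h1 j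
      _ = (B : ℤ) * (((i + 1 : ℕ) : ℤ) * A' % N')
            + ∑ j ∈ Finset.range B, (((((i + 1 : ℕ) : ℤ) * A') - ((i + 1 : ℕ) : ℤ) * A' % N')
                + (j : ℤ) * (((a * b : ℕ) : ℤ) * ((A * N * n : ℕ) : ℤ)))
              % (((a * b : ℕ) : ℤ) * (B : ℤ)) := by
          rw [Finset.sum_add_distrib, Finset.sum_const, Finset.card_range, nsmul_eq_mul]
      _ = (B : ℤ) * (((i + 1 : ℕ) : ℤ) * A' % N')
            + ((B : ℤ) * (((((i + 1 : ℕ) : ℤ) * A') - ((i + 1 : ℕ) : ℤ) * A' % N') % ((a * b : ℕ) : ℤ))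
               + ((a * b : ℕ) : ℤ) * ∑ j ∈ Finset.range B, (j : ℤ)) := by
          rw [aux_inner_sum _ (a * b) (A * N * n) B (by positivity) hB cE]
  -- decompose the full sum
  set S : ℤ := ∑ k ∈ Finset.Icc 1 (a * B * N), aoiBasic A' B' N' k with hSdef
  set T : ℤ := ∑ i ∈ Finset.range (N * a),
      ((((i + 1 : ℕ) : ℤ) * A' - ((i + 1 : ℕ) : ℤ) * A' % N') % ((a * b : ℕ) : ℤ)) with hTdef
  set GB : ℤ := ∑ j ∈ Finset.range B, (j : ℤ) with hGBdef
  set GNa : ℤ := ∑ j ∈ Finset.range (N * a), (j : ℤ) with hGNadef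
  have hRsum : ∑ i ∈ Finset.range (N * a), (((i + 1 : ℕ) : ℤ) * A' % N') = (n : ℤ) * GNa := by
    have h1 : ∀ i : ℕ, ((i + 1 : ℕ) : ℤ) * A' % N'
        = (n : ℤ) * ((((A * b : ℕ) : ℤ) + (i : ℤ) * ((A * b : ℕ) : ℤ)) % ((N * a : ℕ) : ℤ)) := by
      intro i
      have h2 : ((i + 1 : ℕ) : ℤ) * A'
          = (n : ℤ) * (((A * b : ℕ) : ℤ) + (i : ℤ) * ((A * b : ℕ) : ℤ)) := by
        rw [hA']; push_cast; ring
      have h3 : N' = (n : ℤ) * ((N * a : ℕ) : ℤ) := by rw [hN']; push_cast; ring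
      rw [h2, h3, Int.mul_emod_mul_of_pos _ _ (by exact_mod_cast hnpos)]
    calc ∑ i ∈ Finset.range (N * a), (((i + 1 : ℕ) : ℤ) * A' % N')
        = ∑ i ∈ Finset.range (N * a),
            (n : ℤ) * ((((A * b : ℕ) : ℤ) + (i : ℤ) * ((A * b : ℕ) : ℤ)) % ((N * a : ℕ) : ℤ)) :=
          Finset.sum_congr rfl fun i _ => h1 i
      _ = (n : ℤ) * ∑ i ∈ Finset.range (N * a),
            ((((A * b : ℕ) : ℤ) + (i : ℤ) * ((A * b : ℕ) : ℤ)) % ((N * a : ℕ) : ℤ)) := by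
          rw [Finset.mul_sum]
      _ = (n : ℤ) * GNa := by
          rw [aux_sum_emod ((A * b : ℕ) : ℤ) (A * b) (N * a) (by positivity) hgcd1, hGNadef]
  have hS : S = (B : ℤ) * ((n : ℤ) * GNa) + ((B : ℤ) * T + ((a * b : ℕ) : ℤ) * (((N * a : ℕ) : ℤ) * GB)) := by
    rw [hSdef]
    have hK : a * B * N = (N * a) * B := by ring
    rw [hK, aux_sum_decompose _ (N * a) B (by positivity)]
    calc ∑ i ∈ Finset.range (N * a), ∑ j ∈ Finset.range B, aoiBasic A' B' N' (i + 1 + j * (N * a))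
        = ∑ i ∈ Finset.range (N * a), ((B : ℤ) * (((i + 1 : ℕ) : ℤ) * A' % N')
            + ((B : ℤ) * (((((i + 1 : ℕ) : ℤ) * A') - ((i + 1 : ℕ) : ℤ) * A' % N') % ((a * b : ℕ) : ℤ))
               + ((a * b : ℕ) : ℤ) * GB)) := Finset.sum_congr rfl fun i _ => key i
      _ = (B : ℤ) * ((n : ℤ) * GNa) + ((B : ℤ) * T + ((a * b : ℕ) : ℤ) * (((N * a : ℕ) : ℤ) * GB)) := by
          rw [Finset.sum_add_distrib, Finset.sum_add_distrib, ← Finset.mul_sum, ← Finset.mul_sum,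
            Finset.sum_const, Finset.card_range, nsmul_eq_mul, hRsum, ← hTdef]
          push_cast
          ring
  -- Gauss sums
  have hGB : 2 * GB = (B : ℤ) * ((B : ℤ) - 1) := by
    have h := Finset.sum_range_id_mul_two B
    have hB1 : 1 ≤ B := hB
    zify [hB1] at h
    have h2 : GB = ((∑ i ∈ Finset.range B, i : ℕ) : ℤ) := by rw [hGBdef]; push_cast; rfl
    linarith
  have hGNa : 2 * GNa = ((N * a : ℕ) : ℤ) * (((N * a : ℕ) : ℤ) - 1) := by
    have h := Finset.sum_range_id_mul_two (N * a)
    have hNa1 : 1 ≤ N * a := Nat.mul_pos hN hapos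
    zify [hNa1] at h
    rw [hGNadef]
    push_cast
    linarith
  -- bounds on T
  have habZ : (0 : ℤ) < ((a * b : ℕ) : ℤ) := by positivity
  have hT0 : 0 ≤ T := Finset.sum_nonneg fun i _ => Int.emod_nonneg _ habZ.ne'
  have hT1 : T ≤ ((N * a : ℕ) : ℤ) * ((a * b : ℕ) : ℤ) := by
    calc T ≤ ∑ _i ∈ Finset.range (N * a), ((a * b : ℕ) : ℤ) :=
          Finset.sum_le_sum fun i _ => (Int.emod_lt_of_pos _ habZ).le
      _ = ((N * a : ℕ) : ℤ) * ((a * b : ℕ) : ℤ) := by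
          rw [Finset.sum_const, Finset.card_range, nsmul_eq_mul]
  -- pass to ℚ
  have h2S : 2 * S = (B : ℤ) * (n : ℤ) * (((N * a : ℕ) : ℤ) * (((N * a : ℕ) : ℤ) - 1))
      + 2 * (B : ℤ) * T + ((a * b : ℕ) : ℤ) * ((N * a : ℕ) : ℤ) * ((B : ℤ) * ((B : ℤ) - 1)) := by
    linear_combination 2 * hS + (B : ℤ) * (n : ℤ) * hGNa + ((a * b : ℕ) : ℤ) * ((N * a : ℕ) : ℤ) * hGB
  have hq : 2 * (S : ℚ) = (B : ℚ) * (n : ℚ) * (((N : ℚ) * a) * ((N : ℚ) * a - 1))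
      + 2 * (B : ℚ) * (T : ℚ) + ((a : ℚ) * b) * ((N : ℚ) * a) * ((B : ℚ) * ((B : ℚ) - 1)) := by
    exact_mod_cast congrArg (fun z : ℤ => (z : ℚ)) h2S
  have hT0q : (0 : ℚ) ≤ (T : ℚ) := by exact_mod_cast hT0
  have hT1q : (T : ℚ) ≤ ((N : ℚ) * a) * ((a : ℚ) * b) := by exact_mod_cast hT1
  have hcast : ∑ k ∈ Finset.Icc 1 (a * B * N), ((aoiBasic A' B' N' k : ℤ) : ℚ) = (S : ℚ) := by
    rw [hSdef]; push_cast; rfl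
  have hD : (0 : ℚ) < (a : ℚ) * B * N := by positivity
  have hBq : (0 : ℚ) ≤ (B : ℚ) := by positivity
  constructor
  · rw [hcast, one_div_mul_eq_div, le_div_iff₀ hD]
    nlinarith [hq, mul_nonneg hBq hT0q]
  · rw [hcast, one_div_mul_eq_div, div_le_iff₀ hD]
    nlinarith [hq, mul_le_mul_of_nonneg_left hT1q hBq]
end

section
/- In the basic model, the largest occurring Age-of-Information value is bounded by α_k ≤ B' + N' − n for every k ≥ 0. -/
/-- Corollary 1, eq. (14): in the basic model the AoI is bounded by
`B' + N' − n` for every `k`. -/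
theorem stmt9 (A B N a b n : ℕ) (hA : 0 < A) (hB : 0 < B) (hN : 0 < N)
    (hapos : 0 < a) (hbpos : 0 < b) (hnpos : 0 < n)
    (ha : a = Nat.gcd (B * a * b) (N * a * n))
    (hb : b = Nat.gcd (A * b * n) (B * a * b))
    (hn : n = Nat.gcd (A * b * n) (N * a * n)) :
    ∀ k : ℕ,
      aoiBasic (A * b * n : ℤ) (B * a * b : ℤ) (N * a * n : ℤ) k ≤
        (B : ℤ) * a * b + (N : ℤ) * a * n - n := by
  intro k
  set A' : ℤ := (A : ℤ) * b * n with hA'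
  set B' : ℤ := (B : ℤ) * a * b with hB'
  set N' : ℤ := (N : ℤ) * a * n with hN'
  have hB'pos : 0 < B' := by positivity
  have hN'pos : 0 < N' := by positivity
  set x : ℤ := (k : ℤ) * A' with hx
  have hnA : (n : ℤ) ∣ A' := ⟨(A : ℤ) * b, by ring⟩
  have hnN : (n : ℤ) ∣ N' := ⟨(N : ℤ) * a, by ring⟩
  have hnx : (n : ℤ) ∣ x := Dvd.dvd.mul_left hnA _
  have hmod : (n : ℤ) ∣ x % N' := by
    have : x % N' = x - N' * (x / N') := by
      rw [Int.emod_def]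
    rw [this]
    exact dvd_sub hnx (Dvd.dvd.mul_right hnN _)
  have h1 : x % N' ≤ N' - n := by
    have hlt : x % N' < N' := Int.emod_lt_of_pos x hN'pos
    have hd : (n : ℤ) ∣ N' - x % N' := dvd_sub hnN hmod
    have hpos : 0 < N' - x % N' := by omega
    have := Int.le_of_dvd hpos hd
    omega
  have h2 : (x % B' - x % N') % B' ≤ B' - 1 := by
    have := Int.emod_lt_of_pos (x % B' - x % N') hB'pos
    omega
  have : aoiBasic A' B' N' k = x % N' + (x % B' - x % N') % B' := rfl
  rw [this]
  have hn1 : (1 : ℤ) ≤ n := by exact_mod_cast hnpos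
  omega
end

section
/- In the extended model, for every fixed l ≥ 0, over a·B·N consecutive steps the sequence (α^{[l]}_k) generates the following distribution of values: the multiset { α^{[l]}_k : k = 1, …, aBN } equals the multiset union over i = 0, …, a−1 and j = 0, …, N−1 of the arithmetic progressions { c^{[l]}_{ij} + m·a·b : m = 0, 1, …, B−1 }. -/
set_option linter.dupNamespace false

namespace Stmt11Aux

def cdiv (x y : ℤ) : ℤ := -(-x / y)

theorem mul_cdiv (x y : ℤ) : y * cdiv x y = x + -x % y := by
  have h := Int.mul_ediv_add_emod (-x) y
  have h2 : y * cdiv x y = -(y * (-x / y)) := by rw [cdiv]; ring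
  rw [h2]; linarith

theorem cdiv_le {y : ℤ} (hy : 0 < y) (x : ℤ) : x ≤ y * cdiv x y := by
  rw [mul_cdiv]; have := Int.emod_nonneg (-x) hy.ne'; linarith

theorem cdiv_lt {y : ℤ} (hy : 0 < y) (x : ℤ) : y * cdiv x y < x + y := by
  rw [mul_cdiv]; have := Int.emod_lt_of_pos (-x) hy; linarith

theorem cdiv_unique {x y c : ℤ} (hy : 0 < y) (h1 : x ≤ y * c) (h2 : y * c < x + y) :
    cdiv x y = c := by
  have a1 := cdiv_le hy x
  have a2 := cdiv_lt hy x
  have l1 : cdiv x y < c + 1 := by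
    have h3 : y * cdiv x y < y * (c + 1) := by nlinarith
    exact lt_of_mul_lt_mul_left h3 hy.le
  have l2 : c < cdiv x y + 1 := by
    have h3 : y * c < y * (cdiv x y + 1) := by nlinarith
    exact lt_of_mul_lt_mul_left h3 hy.le
  omega

theorem cdiv_nest {y B : ℤ} (hy : 0 < y) (hB : 0 < B) (E p : ℤ) :
    cdiv (E - y * p) (y * B) = cdiv (cdiv E y - p) B := by
  have h1 := cdiv_le hB (cdiv E y - p)
  have h2 := cdiv_lt hB (cdiv E y - p)
  have h3 := cdiv_le hy E
  have h4 := cdiv_lt hy E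
  apply cdiv_unique (mul_pos hy hB)
  · calc E - y * p ≤ y * cdiv E y - y * p := by linarith
      _ = y * (cdiv E y - p) := by ring
      _ ≤ y * (B * cdiv (cdiv E y - p) B) := mul_le_mul_of_nonneg_left h1 hy.le
      _ = y * B * cdiv (cdiv E y - p) B := by ring
  · have h5 : B * cdiv (cdiv E y - p) B ≤ cdiv E y - p + B - 1 := by omega
    have h6 := mul_le_mul_of_nonneg_left h5 hy.le
    nlinarith [h6, h4]

theorem cdiv_mod (p e B : ℤ) : p + B * cdiv (e - p) B = e + (p - e) % B := by
  have h : cdiv (e - p) B = -((p - e) / B) := by rw [cdiv, neg_sub]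
  rw [h, Int.emod_def]; ring

theorem ceil_cdiv (x : ℤ) (y : ℕ) : ⌈(x : ℚ) / (y : ℚ)⌉ = cdiv x (y : ℤ) := by
  have h : ((x : ℚ) / (y : ℚ)) = -((((-x : ℤ) : ℚ)) / ((y : ℕ) : ℚ)) := by push_cast; ring
  rw [h, Int.ceil_neg, Rat.floor_intCast_div_natCast, cdiv]

theorem emod_eq_emod {M x y : ℤ} (h : M ∣ y - x) : x % M = y % M :=
  Int.modEq_iff_dvd.mpr h

theorem dvd_of_emod_eq {M x y : ℤ} (h : x % M = y % M) : M ∣ y - x :=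
  Int.modEq_iff_dvd.mp h

theorem eq_zero_of_dvd_of_lt {B d : ℤ} (h : B ∣ d) (h1 : -B < d) (h2 : d < B) : d = 0 := by
  have hB : 0 < B := by linarith
  obtain ⟨t, rfl⟩ := h
  rcases lt_trichotomy t 0 with ht | ht | ht
  · have := mul_le_mul_of_nonneg_left (show t ≤ -1 by omega) hB.le
    nlinarith
  · rw [ht, mul_zero]
  · have := mul_le_mul_of_nonneg_left (show 1 ≤ t by omega) hB.le
    nlinarith

theorem core (R XB y Bz : ℤ) (hy : 0 < y) (hB : 0 < Bz) :
    R + (XB % (Bz * y) - R) % (Bz * y)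
      = XB % y + y * (cdiv (R - XB % y) y
          + (XB % (Bz * y) / y - cdiv (R - XB % y) y) % Bz) := by
  set RB := XB % (Bz * y) with hRB
  set SB := XB % y with hSB
  set P := RB / y with hP
  set e := cdiv (R - SB) y with he
  have hmod : RB % y = SB := by
    rw [hRB, hSB]; exact Int.emod_emod_of_dvd _ ⟨Bz, mul_comm Bz y⟩
  have hdecomp : y * P + SB = RB := by
    rw [← hmod, hP]; exact Int.mul_ediv_add_emod RB y
  have h2 : R + (RB - R) % (Bz * y) = RB + (Bz * y) * cdiv (R - RB) (Bz * y) := by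
    have hc : cdiv (R - RB) (Bz * y) = -((RB - R) / (Bz * y)) := by rw [cdiv, neg_sub]
    rw [Int.emod_def, hc]; ring
  have h3 : cdiv (R - RB) (Bz * y) = cdiv (e - P) Bz := by
    have hx : R - RB = (R - SB) - y * P := by linarith
    have hcomm : Bz * y = y * Bz := mul_comm _ _
    rw [hx, hcomm, cdiv_nest hy hB, he]
  have h4 : P + Bz * cdiv (e - P) Bz = e + (P - e) % Bz := cdiv_mod P e Bz
  rw [h2, h3]
  linear_combination y * h4 - hdecomp


end Stmt11Aux

open Stmt11Aux



/-- The `l`-failure Age-of-Information sequence of the extended model. -/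
def aoiExt (A' B' N' ΔB ΔN : ℤ) (l k : ℕ) : ℤ :=
  2 + (l : ℤ) * N' + ((k : ℤ) * A' - ΔN - 1) % N' +
    (((k : ℤ) * A' - ΔB - 2 - (l : ℤ) * N') % B' -
      ((k : ℤ) * A' - ΔN - 1) % N') % B'

/-- The starting points `c^{[l]}_{ij}` of Theorem 2. -/
def cExt (A' N' a b n : ℕ) (ΔB ΔN : ℕ) (l : ℕ) (i j : ℕ) : ℤ :=
  2 + (l : ℤ) * N' +
    ((i : ℤ) * A' - ΔB - 2 - (l : ℤ) * N') % ((a : ℤ) * b) +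
    ((a : ℤ) * b) *
      ⌈(((((i : ℤ) * A' - ΔN - 1) % ((a : ℤ) * n)) -
          (((i : ℤ) * A' - ΔB - 2 - (l : ℤ) * N') % ((a : ℤ) * b)) +
          (j : ℤ) * a * n : ℤ) : ℚ) / ((a : ℚ) * b)⌉

/-- Theorem 2 (distribution part): in the extended model, for every fixed `l`,
over `a·B·N` consecutive steps the sequence `α^{[l]}` generates the multiset
union over `i = 0,…,a−1` and `j = 0,…,N−1` of the arithmetic progressions
`{c^{[l]}_{ij} + m·a·b : m = 0,…,B−1}`. -/
theorem stmt11 (A B N a b n : ℕ) (hA : 0 < A) (hB : 0 < B) (hN : 0 < N)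
    (hapos : 0 < a) (hbpos : 0 < b) (hnpos : 0 < n)
    (ha : a = Nat.gcd (B * a * b) (N * a * n))
    (hb : b = Nat.gcd (A * b * n) (B * a * b))
    (hn : n = Nat.gcd (A * b * n) (N * a * n))
    (ΔB ΔN : ℕ) (l : ℕ) :
    (Finset.Icc 1 (a * B * N)).val.map
        (fun k =>
          aoiExt (A * b * n : ℤ) (B * a * b : ℤ) (N * a * n : ℤ) (ΔB : ℤ) (ΔN : ℤ) l k) =
      ((Finset.range a ×ˢ Finset.range N).val.bind
        (fun p => (Multiset.range B).map
          (fun m =>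
            cExt (A * b * n) (N * a * n) a b n ΔB ΔN l p.1 p.2 +
              (m : ℤ) * ((a : ℤ) * b)))) := by
  classical
  -- positivity over ℤ
  have ha0 : ((a : ℤ)) ≠ 0 := by positivity
  have hb0 : ((b : ℤ)) ≠ 0 := by positivity
  have hn0 : ((n : ℤ)) ≠ 0 := by positivity
  have hBz : (0 : ℤ) < (B : ℤ) := by exact_mod_cast hB
  have hNz : (0 : ℤ) < (N : ℤ) := by exact_mod_cast hN
  have hy : (0 : ℤ) < (a : ℤ) * (b : ℤ) := by positivity
  have hw : (0 : ℤ) < (a : ℤ) * (n : ℤ) := by positivity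
  have hNan : (0 : ℤ) < (N : ℤ) * (a : ℤ) * (n : ℤ) := by positivity
  have hBab : (0 : ℤ) < (B : ℤ) * ((a : ℤ) * (b : ℤ)) := by positivity
  -- coprimality facts
  have g1 : Nat.Coprime (A * n) (B * a) := by
    have h1 : A * b * n = b * (A * n) := by ring
    have h2 : B * a * b = b * (B * a) := by ring
    rw [h1, h2, Nat.gcd_mul_left] at hb
    have h3 : b * 1 = b * Nat.gcd (A * n) (B * a) := by rw [mul_one]; exact hb
    exact Nat.coprime_iff_gcd_eq_one.mpr (mul_left_cancel₀ hbpos.ne' h3).symm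
  have g2 : Nat.Coprime (A * b) (N * a) := by
    have h1 : A * b * n = n * (A * b) := by ring
    have h2 : N * a * n = n * (N * a) := by ring
    rw [h1, h2, Nat.gcd_mul_left] at hn
    have h3 : n * 1 = n * Nat.gcd (A * b) (N * a) := by rw [mul_one]; exact hn
    exact Nat.coprime_iff_gcd_eq_one.mpr (mul_left_cancel₀ hnpos.ne' h3).symm
  have g3 : Nat.Coprime (B * b) (N * n) := by
    have h1 : B * a * b = a * (B * b) := by ring
    have h2 : N * a * n = a * (N * n) := by ring
    rw [h1, h2, Nat.gcd_mul_left] at ha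
    have h3 : a * 1 = a * Nat.gcd (B * b) (N * n) := by rw [mul_one]; exact ha
    exact Nat.coprime_iff_gcd_eq_one.mpr (mul_left_cancel₀ hapos.ne' h3).symm
  have g4 : Nat.Coprime B N :=
    Nat.Coprime.coprime_dvd_right (dvd_mul_right N n)
      (Nat.Coprime.coprime_dvd_left (dvd_mul_right B b) g3)
  -- the basic integer quantities
  set XN : ℕ → ℤ := fun k => (k : ℤ) * ((A : ℤ) * (b : ℤ) * (n : ℤ)) - (ΔN : ℤ) - 1 with hXNdef
  set XB : ℕ → ℤ := fun k =>
    (k : ℤ) * ((A : ℤ) * (b : ℤ) * (n : ℤ)) - (ΔB : ℤ) - 2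
      - (l : ℤ) * ((N : ℤ) * (a : ℤ) * (n : ℤ)) with hXBdef
  set J : ℕ → ℕ := fun k =>
    (XN k % ((N : ℤ) * (a : ℤ) * (n : ℤ)) / ((a : ℤ) * (n : ℤ))).toNat with hJdef
  set Ef : ℕ → ℤ := fun k =>
    cdiv (XN k % ((N : ℤ) * (a : ℤ) * (n : ℤ)) - XB k % ((a : ℤ) * (b : ℤ)))
      ((a : ℤ) * (b : ℤ)) with hEdef
  set Pf : ℕ → ℤ := fun k =>
    XB k % ((B : ℤ) * ((a : ℤ) * (b : ℤ))) / ((a : ℤ) * (b : ℤ)) with hPdef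
  set Mi : ℕ → ℕ := fun k => ((Pf k - Ef k) % (B : ℤ)).toNat with hMdef
  set φ : ℕ → (ℕ × ℕ) × ℕ := fun k => ((k % a, J k), Mi k) with hφdef
  set G : (ℕ × ℕ) × ℕ → ℤ := fun t =>
    cExt (A * b * n) (N * a * n) a b n ΔB ΔN l t.1.1 t.1.2
      + (t.2 : ℤ) * ((a : ℤ) * (b : ℤ)) with hGdef
  -- bounds
  have hRNnn : ∀ k : ℕ, 0 ≤ XN k % ((N : ℤ) * (a : ℤ) * (n : ℤ)) :=
    fun k => Int.emod_nonneg _ hNan.ne'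
  have hRNlt : ∀ k : ℕ, XN k % ((N : ℤ) * (a : ℤ) * (n : ℤ)) < (N : ℤ) * (a : ℤ) * (n : ℤ) :=
    fun k => Int.emod_lt_of_pos _ hNan
  have hQnn : ∀ k : ℕ, 0 ≤ XN k % ((N : ℤ) * (a : ℤ) * (n : ℤ)) / ((a : ℤ) * (n : ℤ)) :=
    fun k => Int.ediv_nonneg (hRNnn k) hw.le
  have hJQ : ∀ k : ℕ,
      ((J k : ℕ) : ℤ) = XN k % ((N : ℤ) * (a : ℤ) * (n : ℤ)) / ((a : ℤ) * (n : ℤ)) := by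
    intro k; simp only [hJdef]; exact Int.toNat_of_nonneg (hQnn k)
  have hQlt : ∀ k : ℕ, XN k % ((N : ℤ) * (a : ℤ) * (n : ℤ)) / ((a : ℤ) * (n : ℤ)) < (N : ℤ) := by
    intro k
    rw [Int.ediv_lt_iff_lt_mul hw]
    have := hRNlt k; linarith [this, show ((N : ℤ) * (a : ℤ) * (n : ℤ)) = (N : ℤ) * ((a : ℤ) * (n : ℤ)) from by ring]
  have hPnn : ∀ k : ℕ, 0 ≤ Pf k := by
    intro k; simp only [hPdef]
    exact Int.ediv_nonneg (Int.emod_nonneg _ hBab.ne') hy.le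
  have hPlt : ∀ k : ℕ, Pf k < (B : ℤ) := by
    intro k; simp only [hPdef]
    rw [Int.ediv_lt_iff_lt_mul hy]
    exact Int.emod_lt_of_pos _ hBab
  have hMnn : ∀ k : ℕ, 0 ≤ (Pf k - Ef k) % (B : ℤ) := fun k => Int.emod_nonneg _ hBz.ne'
  have hMi : ∀ k : ℕ, ((Mi k : ℕ) : ℤ) = (Pf k - Ef k) % (B : ℤ) := by
    intro k; simp only [hMdef]; exact Int.toNat_of_nonneg (hMnn k)
  have hMlt : ∀ k : ℕ, (Pf k - Ef k) % (B : ℤ) < (B : ℤ) := fun k => Int.emod_lt_of_pos _ hBz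
  -- mod-(a·n) and mod-(a·b) congruences for i = k % a
  have hdm : ∀ k : ℕ, (a : ℤ) * ((k / a : ℕ) : ℤ) + ((k % a : ℕ) : ℤ) = (k : ℤ) := by
    intro k; exact_mod_cast Nat.div_add_mod k a
  have hsb : ∀ k : ℕ,
      (((k % a : ℕ) : ℤ) * ((A * b * n : ℕ) : ℤ) - (ΔB : ℤ) - 2
          - (l : ℤ) * ((N * a * n : ℕ) : ℤ)) % ((a : ℤ) * (b : ℤ))
        = XB k % ((a : ℤ) * (b : ℤ)) := by
    intro k
    apply emod_eq_emod
    refine ⟨((k / a : ℕ) : ℤ) * (A : ℤ) * (n : ℤ), ?_⟩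
    simp only [hXBdef]; push_cast
    have h := hdm k; push_cast at h
    linear_combination (-((A : ℤ) * (b : ℤ) * (n : ℤ))) * h
  have hsn : ∀ k : ℕ,
      (((k % a : ℕ) : ℤ) * ((A * b * n : ℕ) : ℤ) - (ΔN : ℤ) - 1) % ((a : ℤ) * (n : ℤ))
        = XN k % ((a : ℤ) * (n : ℤ)) := by
    intro k
    apply emod_eq_emod
    refine ⟨((k / a : ℕ) : ℤ) * (A : ℤ) * (b : ℤ), ?_⟩
    simp only [hXNdef]; push_cast
    have h := hdm k; push_cast at h
    linear_combination (-((A : ℤ) * (b : ℤ) * (n : ℤ))) * h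
  -- the inner-mod splitting
  have hsplitN : ∀ k : ℕ,
      XN k % ((N : ℤ) * (a : ℤ) * (n : ℤ)) % ((a : ℤ) * (n : ℤ)) = XN k % ((a : ℤ) * (n : ℤ)) :=
    fun k => Int.emod_emod_of_dvd _ ⟨(N : ℤ), by ring⟩
  have hsplitB : ∀ k : ℕ,
      XB k % ((B : ℤ) * ((a : ℤ) * (b : ℤ))) % ((a : ℤ) * (b : ℤ))
        = XB k % ((a : ℤ) * (b : ℤ)) :=
    fun k => Int.emod_emod_of_dvd _ ⟨(B : ℤ), by ring⟩
  -- pointwise identity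
  have hpoint : ∀ k : ℕ,
      aoiExt (A * b * n : ℤ) (B * a * b : ℤ) (N * a * n : ℤ) (ΔB : ℤ) (ΔN : ℤ) l k
        = G (φ k) := by
    intro k
    show 2 + (l : ℤ) * ((N : ℤ) * (a : ℤ) * (n : ℤ))
        + XN k % ((N : ℤ) * (a : ℤ) * (n : ℤ))
        + (XB k % ((B : ℤ) * (a : ℤ) * (b : ℤ)) - XN k % ((N : ℤ) * (a : ℤ) * (n : ℤ)))
            % ((B : ℤ) * (a : ℤ) * (b : ℤ))
        = G (φ k)
    rw [show ((B : ℤ) * (a : ℤ) * (b : ℤ)) = (B : ℤ) * ((a : ℤ) * (b : ℤ)) from by ring]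
    have main := core (XN k % ((N : ℤ) * (a : ℤ) * (n : ℤ))) (XB k)
      ((a : ℤ) * (b : ℤ)) (B : ℤ) hy hBz
    have hGval : G (φ k)
        = 2 + (l : ℤ) * ((N : ℤ) * (a : ℤ) * (n : ℤ))
          + XB k % ((a : ℤ) * (b : ℤ))
          + ((a : ℤ) * (b : ℤ)) * (Ef k + (Pf k - Ef k) % (B : ℤ)) := by
      show cExt (A * b * n) (N * a * n) a b n ΔB ΔN l (k % a) (J k)
          + ((Mi k : ℕ) : ℤ) * ((a : ℤ) * (b : ℤ)) = _
      simp only [cExt]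
      rw [hsb k, hsn k]
      have hceil :
          ⌈((XN k % ((a : ℤ) * (n : ℤ)) - XB k % ((a : ℤ) * (b : ℤ))
              + ((J k : ℕ) : ℤ) * (a : ℤ) * (n : ℤ) : ℤ) : ℚ) / ((a : ℚ) * (b : ℚ))⌉
            = Ef k := by
        rw [show ((a : ℚ) * (b : ℚ)) = (((a * b : ℕ) : ℕ) : ℚ) from by push_cast; ring,
          ceil_cdiv]
        rw [show (((a * b : ℕ) : ℕ) : ℤ) = (a : ℤ) * (b : ℤ) from by push_cast; ring]
        simp only [hEdef]
        congr 1
        have hdc := Int.mul_ediv_add_emod (XN k % ((N : ℤ) * (a : ℤ) * (n : ℤ))) ((a : ℤ) * (n : ℤ))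
        rw [hJQ k]
        linear_combination hdc - hsplitN k
      rw [hceil, hMi k]
      push_cast
      ring
    rw [hGval]
    linarith [main]
  -- injectivity
  have hinj : Set.InjOn φ (Finset.Icc 1 (a * B * N) : Finset ℕ) := by
    intro k hk k' hk' hEq
    simp only [Finset.coe_Icc, Set.mem_Icc] at hk hk'
    simp only [hφdef, Prod.mk.injEq] at hEq
    obtain ⟨⟨h1, h2⟩, h3⟩ := hEq
    -- a ∣ k' - k
    have hka : (a : ℤ) ∣ (k' : ℤ) - (k : ℤ) := (Nat.ModEq.dvd (h1 : k ≡ k' [MOD a]))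
    obtain ⟨t, ht⟩ := hka
    -- small-mod congruences
    have hXNdiff : ∀ m m' : ℕ, XN m' - XN m = ((m' : ℤ) - m) * ((A : ℤ) * b * n) := by
      intro m m'; simp only [hXNdef]; ring
    have hXBdiff : ∀ m m' : ℕ, XB m' - XB m = ((m' : ℤ) - m) * ((A : ℤ) * b * n) := by
      intro m m'; simp only [hXBdef]; ring
    have hSNeq : XN k % ((a : ℤ) * (n : ℤ)) = XN k' % ((a : ℤ) * (n : ℤ)) := by
      apply emod_eq_emod
      refine ⟨t * (A : ℤ) * (b : ℤ), ?_⟩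
      rw [hXNdiff k k']
      linear_combination ((A : ℤ) * (b : ℤ) * (n : ℤ)) * ht
    have hSBeq : XB k % ((a : ℤ) * (b : ℤ)) = XB k' % ((a : ℤ) * (b : ℤ)) := by
      apply emod_eq_emod
      refine ⟨t * (A : ℤ) * (n : ℤ), ?_⟩
      rw [hXBdiff k k']
      linear_combination ((A : ℤ) * (b : ℤ) * (n : ℤ)) * ht
    -- RN equality
    have hQeq : XN k % ((N : ℤ) * (a : ℤ) * (n : ℤ)) / ((a : ℤ) * (n : ℤ))
        = XN k' % ((N : ℤ) * (a : ℤ) * (n : ℤ)) / ((a : ℤ) * (n : ℤ)) := by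
      rw [← hJQ k, ← hJQ k', h2]
    have hRNeq : XN k % ((N : ℤ) * (a : ℤ) * (n : ℤ))
        = XN k' % ((N : ℤ) * (a : ℤ) * (n : ℤ)) := by
      have e1 := Int.mul_ediv_add_emod (XN k % ((N : ℤ) * (a : ℤ) * (n : ℤ))) ((a : ℤ) * (n : ℤ))
      have e2 := Int.mul_ediv_add_emod (XN k' % ((N : ℤ) * (a : ℤ) * (n : ℤ))) ((a : ℤ) * (n : ℤ))
      have m1 := hsplitN k
      have m2 := hsplitN k'
      rw [hQeq] at e1
      linarith [e1, e2, m1, m2, hSNeq,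
        mul_le_mul_of_nonneg_left (le_refl (0:ℤ)) (le_refl (0:ℤ))]
    -- E equality
    have hEeq : Ef k = Ef k' := by
      simp only [hEdef]; rw [hRNeq, hSBeq]
    -- P equality
    have hPeq : Pf k = Pf k' := by
      have hMeq : (Pf k - Ef k) % (B : ℤ) = (Pf k' - Ef k') % (B : ℤ) := by
        rw [← hMi k, ← hMi k', h3]
      have hdvd : (B : ℤ) ∣ (Pf k' - Ef k') - (Pf k - Ef k) := dvd_of_emod_eq hMeq
      rw [hEeq] at hdvd
      have hdvd' : (B : ℤ) ∣ Pf k' - Pf k := by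
        have : (Pf k' - Ef k') - (Pf k - Ef k') = Pf k' - Pf k := by ring
        rwa [this] at hdvd
      have h0 := eq_zero_of_dvd_of_lt hdvd'
        (by linarith [hPnn k', hPlt k]) (by linarith [hPnn k, hPlt k'])
      linarith
    -- RB equality
    have hRBeq : XB k % ((B : ℤ) * ((a : ℤ) * (b : ℤ)))
        = XB k' % ((B : ℤ) * ((a : ℤ) * (b : ℤ))) := by
      have e1 := Int.mul_ediv_add_emod (XB k % ((B : ℤ) * ((a : ℤ) * (b : ℤ)))) ((a : ℤ) * (b : ℤ))
      have e2 := Int.mul_ediv_add_emod (XB k' % ((B : ℤ) * ((a : ℤ) * (b : ℤ)))) ((a : ℤ) * (b : ℤ))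
      have m1 := hsplitB k
      have m2 := hsplitB k'
      have hPP : XB k % ((B : ℤ) * ((a : ℤ) * (b : ℤ))) / ((a : ℤ) * (b : ℤ))
          = XB k' % ((B : ℤ) * ((a : ℤ) * (b : ℤ))) / ((a : ℤ) * (b : ℤ)) := by
        have := hPeq; simp only [hPdef] at this; exact this
      rw [hPP] at e1
      linarith [e1, e2, m1, m2, hSBeq]
    -- big divisibilities
    set d : ℤ := (k' : ℤ) - (k : ℤ) with hd
    have hd1 : ((N : ℤ) * (a : ℤ) * (n : ℤ)) ∣ d * ((A : ℤ) * b * n) := by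
      have := dvd_of_emod_eq hRNeq
      rwa [hXNdiff k k'] at this
    have hd2 : ((B : ℤ) * ((a : ℤ) * (b : ℤ))) ∣ d * ((A : ℤ) * b * n) := by
      have := dvd_of_emod_eq hRBeq
      rwa [hXBdiff k k'] at this
    have hd1' : ((N : ℤ) * (a : ℤ)) ∣ d * ((A : ℤ) * (b : ℤ)) := by
      obtain ⟨u, hu⟩ := hd1
      refine ⟨u, mul_right_cancel₀ hn0 ?_⟩
      linear_combination hu
    have hd2' : ((B : ℤ) * (a : ℤ)) ∣ d * ((A : ℤ) * (n : ℤ)) := by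
      obtain ⟨u, hu⟩ := hd2
      refine ⟨u, mul_right_cancel₀ hb0 ?_⟩
      linear_combination hu
    have hc1 : IsCoprime ((N : ℤ) * (a : ℤ)) ((A : ℤ) * (b : ℤ)) := by
      have := (g2.symm).isCoprime
      push_cast at this; exact this
    have hc2 : IsCoprime ((B : ℤ) * (a : ℤ)) ((A : ℤ) * (n : ℤ)) := by
      have := (g1.symm).isCoprime
      push_cast at this; exact this
    have hNa_d : ((N : ℤ) * (a : ℤ)) ∣ d := hc1.dvd_of_dvd_mul_right hd1'
    have hBa_d : ((B : ℤ) * (a : ℤ)) ∣ d := hc2.dvd_of_dvd_mul_right hd2'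
    obtain ⟨u, hu⟩ := hNa_d
    have hBu : (B : ℤ) ∣ (N : ℤ) * u := by
      obtain ⟨v, hv⟩ := hBa_d
      refine ⟨v, mul_left_cancel₀ ha0 ?_⟩
      linear_combination hv - hu
    have hc3 : IsCoprime ((B : ℤ)) ((N : ℤ)) := by
      have := g4.isCoprime; exact_mod_cast this
    have hBdvd : (B : ℤ) ∣ u := hc3.dvd_of_dvd_mul_left hBu
    obtain ⟨w', hw'⟩ := hBdvd
    have habn : ((a : ℤ) * (B : ℤ) * (N : ℤ)) ∣ d := by
      refine ⟨w', ?_⟩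
      linear_combination hu + ((N : ℤ) * (a : ℤ)) * hw'
    have hkZ : (1 : ℤ) ≤ (k : ℤ) ∧ (k : ℤ) ≤ (a : ℤ) * (B : ℤ) * (N : ℤ) := by
      constructor
      · exact_mod_cast hk.1
      · have := hk.2; push_cast; exact_mod_cast this
    have hkZ' : (1 : ℤ) ≤ (k' : ℤ) ∧ (k' : ℤ) ≤ (a : ℤ) * (B : ℤ) * (N : ℤ) := by
      constructor
      · exact_mod_cast hk'.1
      · have := hk'.2; push_cast; exact_mod_cast this
    have hd0 : d = 0 := eq_zero_of_dvd_of_lt habn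
      (by simp only [hd]; linarith [hkZ.1, hkZ.2, hkZ'.1, hkZ'.2])
      (by simp only [hd]; linarith [hkZ.1, hkZ.2, hkZ'.1, hkZ'.2])
    have : (k : ℤ) = (k' : ℤ) := by simp only [hd] at hd0; linarith
    exact_mod_cast this
  -- membership
  have hφmem : ∀ k : ℕ, φ k ∈ (Finset.range a ×ˢ Finset.range N) ×ˢ Finset.range B := by
    intro k
    simp only [hφdef, Finset.mem_product, Finset.mem_range]
    refine ⟨⟨Nat.mod_lt k hapos, ?_⟩, ?_⟩
    · have h := hQlt k
      rw [← hJQ k] at h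
      exact_mod_cast h
    · have h := hMlt k
      rw [← hMi k] at h
      exact_mod_cast h
  -- image equality
  have hcardT : ((Finset.range a ×ˢ Finset.range N) ×ˢ Finset.range B).card = a * B * N := by
    simp only [Finset.card_product, Finset.card_range]
    ring
  have hcardS : (Finset.Icc 1 (a * B * N)).card = a * B * N := by
    rw [Nat.card_Icc]; omega
  have himage : Finset.image φ (Finset.Icc 1 (a * B * N))
      = (Finset.range a ×ˢ Finset.range N) ×ˢ Finset.range B := by
    apply Finset.eq_of_subset_of_card_le
    · intro x hx
      obtain ⟨k, hkmem, rfl⟩ := Finset.mem_image.mp hx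
      exact hφmem k
    · rw [Finset.card_image_of_injOn hinj, hcardS, hcardT]
  -- assembly
  calc (Finset.Icc 1 (a * B * N)).val.map
        (fun k =>
          aoiExt (A * b * n : ℤ) (B * a * b : ℤ) (N * a * n : ℤ) (ΔB : ℤ) (ΔN : ℤ) l k)
      = (Finset.Icc 1 (a * B * N)).val.map (fun k => G (φ k)) :=
        Multiset.map_congr rfl (fun k _ => hpoint k)
    _ = ((Finset.Icc 1 (a * B * N)).val.map φ).map G := by
        rw [Multiset.map_map]; rfl
    _ = (Finset.image φ (Finset.Icc 1 (a * B * N))).val.map G := by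
        rw [Finset.image_val_of_injOn hinj]
    _ = (((Finset.range a ×ˢ Finset.range N) ×ˢ Finset.range B)).val.map G := by
        rw [himage]
    _ = ((Finset.range a ×ˢ Finset.range N).val.bind
        (fun p => (Multiset.range B).map
          (fun m =>
            cExt (A * b * n) (N * a * n) a b n ΔB ΔN l p.1 p.2 +
              (m : ℤ) * ((a : ℤ) * b)))) := by
        rw [Finset.product_val]
        rw [show (Finset.range a ×ˢ Finset.range N).val ×ˢ (Finset.range B).val
          = (Finset.range a ×ˢ Finset.range N).val.bind
              (fun p => (Finset.range B).val.map (Prod.mk p)) from rfl]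
        rw [Multiset.map_bind]
        congr 1
        funext p
        rw [show ((Multiset.range B : Multiset ℕ) : Multiset ℤ)
            = (Multiset.range B).map (fun x : ℕ => (x : ℤ)) from
          Multiset.bind_singleton _ _]
        rw [Multiset.map_map, Multiset.map_map]
        rfl
end

section
/- In the basic model, the average of the starting points c_{ij} is sandwiched as follows: n·(a·N − 1)/2 ≤ (1/(a·N))·Σ_{i=0}^{a−1} Σ_{j=0}^{N−1} c_{ij} ≤ n·(a·N − 1)/2 + a·b. -/
lemma ceil_mul_helper (m : ℕ) (x : ℤ) :
    (m : ℤ) * ⌈(x : ℚ) / (m : ℚ)⌉ = x + (-x) % m := by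
  have hc : ⌈(x : ℚ) / (m : ℚ)⌉ = -((-x) / (m : ℤ)) := by
    rw [← Rat.floor_intCast_div_natCast (-x) m, ← Int.ceil_neg]
    congr 1
    push_cast
    ring
  have h1 : (m : ℤ) * ((-x) / (m : ℤ)) = (-x) - (-x) % m := by
    rw [eq_sub_iff_add_eq, Int.mul_ediv_add_emod]
  rw [hc]
  linarith

lemma sum_zmod_eq_range {M : Type*} [AddCommMonoid M] (a : ℕ) [NeZero a] (f : ZMod a → M) :
    ∑ x : ZMod a, f x = ∑ i ∈ Finset.range a, f i :=
  Finset.sum_nbij' (fun x => x.val) (fun i => (i : ZMod a))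
    (fun x _ => Finset.mem_range.mpr x.val_lt)
    (fun _ _ => Finset.mem_univ _)
    (fun x _ => ZMod.natCast_rightInverse x)
    (fun i hi => ZMod.val_natCast_of_lt (Finset.mem_range.mp hi))
    (fun x _ => by rw [ZMod.natCast_rightInverse x])

lemma sum_mul_mod (a k : ℕ) (ha : 0 < a) (h : Nat.Coprime k a) :
    ∑ i ∈ Finset.range a, (i * k % a) = ∑ i ∈ Finset.range a, i := by
  haveI : NeZero a := ⟨ha.ne'⟩
  have h1 : ∀ i : ℕ, i * k % a = (((i : ZMod a) * (k : ZMod a)).val) := by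
    intro i
    rw [← Nat.cast_mul, ZMod.val_natCast]
  simp only [h1]
  rw [← sum_zmod_eq_range a (fun x => (x * (k : ZMod a)).val)]
  have hb := Units.mulRight_bijective (ZMod.unitOfCoprime k h)
  rw [Fintype.sum_bijective _ hb (fun x => (x * (k : ZMod a)).val) (fun x => x.val)
    (fun x => by rw [ZMod.coe_unitOfCoprime])]
  rw [sum_zmod_eq_range a (fun x => x.val)]
  exact Finset.sum_congr rfl fun i hi => ZMod.val_natCast_of_lt (Finset.mem_range.mp hi)

/-- In the basic model, the average of the starting points `c_{ij}` is
sandwiched between `n·(a·N − 1)/2` and `n·(a·N − 1)/2 + a·b`. -/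
theorem stmt12 (A B N a b n : ℕ) (hA : 0 < A) (hB : 0 < B) (hN : 0 < N)
    (hapos : 0 < a) (hbpos : 0 < b) (hnpos : 0 < n)
    (ha : a = Nat.gcd (B * a * b) (N * a * n))
    (hb : b = Nat.gcd (A * b * n) (B * a * b))
    (hn : n = Nat.gcd (A * b * n) (N * a * n)) :
    (n : ℚ) * ((a : ℚ) * N - 1) / 2 ≤
        (1 / ((a : ℚ) * N)) *
          ∑ i ∈ Finset.range a, ∑ j ∈ Finset.range N,
            ((cBasic (A * b * n) a b n i j : ℤ) : ℚ) ∧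
      (1 / ((a : ℚ) * N)) *
          ∑ i ∈ Finset.range a, ∑ j ∈ Finset.range N,
            ((cBasic (A * b * n) a b n i j : ℤ) : ℚ) ≤
        (n : ℚ) * ((a : ℚ) * N - 1) / 2 + (a : ℚ) * b := by
  -- coprimality of A*b and a
  have hcop : Nat.Coprime (A * b) a := by
    have h1 : Nat.gcd (A * b * n) (N * a * n) = Nat.gcd (A * b) (N * a) * n :=
      Nat.gcd_mul_right _ _ _
    have h2 : Nat.gcd (A * b) (N * a) = 1 := by
      have h3 : Nat.gcd (A * b) (N * a) * n = 1 * n := by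
        rw [one_mul, ← h1]; exact hn.symm
      exact Nat.eq_of_mul_eq_mul_right hnpos h3
    exact Nat.Coprime.coprime_dvd_right (dvd_mul_left a N) h2
  have habZ : (0 : ℤ) < (a : ℤ) * b := by positivity
  -- the ceiling identity specialized
  have hceil : ∀ x : ℤ, ((a : ℤ) * b) * ⌈(x : ℚ) / ((a : ℚ) * b)⌉
      = x + (-x) % ((a : ℤ) * b) := by
    intro x
    have h := ceil_mul_helper (a * b) x
    push_cast at h
    exact h
  -- notation
  set rn : ℕ → ℤ := fun i => ((i : ℤ) * ((A : ℤ) * b * n)) % ((a : ℤ) * n) with hrn_def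
  set e : ℕ → ℕ → ℤ := fun i j =>
    (((i : ℤ) * ((A : ℤ) * b * n)) % ((a : ℤ) * b) - ((i : ℤ) * ((A : ℤ) * b * n)) % ((a : ℤ) * n)
      - (j : ℤ) * a * n) % ((a : ℤ) * b) with he_def
  -- pointwise identity
  have hc : ∀ i j : ℕ, cBasic (A * b * n) a b n i j = (rn i + (j : ℤ) * a * n) + e i j := by
    intro i j
    show ((i : ℤ) * ((A * b * n : ℕ) : ℤ)) % ((a : ℤ) * b) +
        ((a : ℤ) * b) * ⌈((((i : ℤ) * ((A * b * n : ℕ) : ℤ)) % ((a : ℤ) * n)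
          - ((i : ℤ) * ((A * b * n : ℕ) : ℤ)) % ((a : ℤ) * b)
          + (j : ℤ) * a * n : ℤ) : ℚ) / ((a : ℚ) * b)⌉ = _
    rw [hceil]
    push_cast
    have hneg : -(((i : ℤ) * ((A : ℤ) * b * n)) % ((a : ℤ) * n)
        - ((i : ℤ) * ((A : ℤ) * b * n)) % ((a : ℤ) * b) + (j : ℤ) * a * n)
        = (((i : ℤ) * ((A : ℤ) * b * n)) % ((a : ℤ) * b)
          - ((i : ℤ) * ((A : ℤ) * b * n)) % ((a : ℤ) * n) - (j : ℤ) * a * n) := by ring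
    rw [hneg]
    simp only [hrn_def, he_def]
    ring
  -- the residues mod a*n
  have hrn : ∀ i : ℕ, rn i = ((i * (A * b) % a) * n : ℕ) := by
    intro i
    have h1 : i * (A * b * n) % (a * n) = (i * (A * b)) % a * n := by
      rw [show i * (A * b * n) = i * (A * b) * n by ring]
      exact Nat.mul_mod_mul_right _ _ _
    simp only [hrn_def]
    rw [show ((i : ℤ) * ((A : ℤ) * b * n)) = ((i * (A * b * n) : ℕ) : ℤ) by push_cast; ring,
      show ((a : ℤ) * n) = ((a * n : ℕ) : ℤ) by push_cast; ring, ← Int.natCast_mod, h1]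
  -- nat Gauss sums
  set sa : ℕ := ∑ i ∈ Finset.range a, i with hsa_def
  set sN : ℕ := ∑ j ∈ Finset.range N, j with hsN_def
  have hsaZ : (sa : ℤ) * 2 = (a : ℤ) * ((a : ℤ) - 1) := by
    have h2 : sa * 2 = a * (a - 1) := by rw [hsa_def]; exact Finset.sum_range_id_mul_two a
    have h : ((sa * 2 : ℕ) : ℤ) = ((a * (a - 1) : ℕ) : ℤ) := Nat.cast_inj.mpr h2
    push_cast [Nat.cast_sub hapos] at h
    linarith
  have hsNZ : (sN : ℤ) * 2 = (N : ℤ) * ((N : ℤ) - 1) := by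
    have h2 : sN * 2 = N * (N - 1) := by rw [hsN_def]; exact Finset.sum_range_id_mul_two N
    have h : ((sN * 2 : ℕ) : ℤ) = ((N * (N - 1) : ℕ) : ℤ) := Nat.cast_inj.mpr h2
    push_cast [Nat.cast_sub hN] at h
    linarith
  -- sum of residues
  have hT : ∑ i ∈ Finset.range a, rn i = ((sa * n : ℕ) : ℤ) := by
    rw [show ∑ i ∈ Finset.range a, rn i
        = ∑ i ∈ Finset.range a, (((i * (A * b) % a) * n : ℕ) : ℤ) from
      Finset.sum_congr rfl fun i _ => hrn i]
    rw [← Nat.cast_sum, ← Finset.sum_mul, sum_mul_mod a (A * b) hapos hcop, ← hsa_def]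
  -- main sums
  set S1 : ℤ := ∑ i ∈ Finset.range a, ∑ j ∈ Finset.range N, (rn i + (j : ℤ) * a * n) with hS1_def
  set S2 : ℤ := ∑ i ∈ Finset.range a, ∑ j ∈ Finset.range N, e i j with hS2_def
  have hsum : ∑ i ∈ Finset.range a, ∑ j ∈ Finset.range N, cBasic (A * b * n) a b n i j
      = S1 + S2 := by
    rw [hS1_def, hS2_def, ← Finset.sum_add_distrib]
    refine Finset.sum_congr rfl fun i _ => ?_
    rw [← Finset.sum_add_distrib]
    exact Finset.sum_congr rfl fun j _ => hc i j
  have hkey : 2 * S1 = (n : ℤ) * ((a : ℤ) * N) * ((a : ℤ) * N - 1) := by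
    have hinner : ∀ i : ℕ, ∑ j ∈ Finset.range N, (rn i + (j : ℤ) * a * n)
        = (N : ℤ) * rn i + (sN : ℤ) * ((a : ℤ) * n) := by
      intro i
      rw [Finset.sum_add_distrib, Finset.sum_const, Finset.card_range, nsmul_eq_mul]
      congr 1
      have hsNcast : ((sN : ℕ) : ℤ) = ∑ j ∈ Finset.range N, (j : ℤ) := by
        rw [hsN_def]; push_cast; rfl
      rw [hsNcast]
      calc ∑ j ∈ Finset.range N, ((j : ℤ) * a * n)
          = ∑ j ∈ Finset.range N, ((j : ℤ) * ((a : ℤ) * n)) :=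
            Finset.sum_congr rfl fun j _ => by ring
        _ = (∑ j ∈ Finset.range N, (j : ℤ)) * ((a : ℤ) * n) := by
            rw [Finset.sum_mul]
    rw [hS1_def]
    rw [Finset.sum_congr rfl fun i _ => hinner i]
    rw [Finset.sum_add_distrib, ← Finset.mul_sum, hT, Finset.sum_const, Finset.card_range,
      nsmul_eq_mul]
    push_cast
    linear_combination (N : ℤ) * (n : ℤ) * hsaZ + (a : ℤ) * (a : ℤ) * (n : ℤ) * hsNZ
  have hS2lb : 0 ≤ S2 := by
    rw [hS2_def]
    refine Finset.sum_nonneg fun i _ => Finset.sum_nonneg fun j _ => ?_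
    exact Int.emod_nonneg _ habZ.ne'
  have hS2ub : S2 ≤ ((a : ℤ) * N) * ((a : ℤ) * b) := by
    rw [hS2_def]
    calc ∑ i ∈ Finset.range a, ∑ j ∈ Finset.range N, e i j
        ≤ ∑ i ∈ Finset.range a, ∑ j ∈ Finset.range N, ((a : ℤ) * b) := by
          refine Finset.sum_le_sum fun i _ => Finset.sum_le_sum fun j _ => ?_
          exact le_of_lt (Int.emod_lt_of_pos _ habZ)
      _ = ((a : ℤ) * N) * ((a : ℤ) * b) := by
          simp [Finset.sum_const, Finset.card_range]
          ring
  -- move to ℚ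
  have hQpos : (0 : ℚ) < (a : ℚ) * N := by positivity
  have hgs : (∑ i ∈ Finset.range a, ∑ j ∈ Finset.range N,
      ((cBasic (A * b * n) a b n i j : ℤ) : ℚ)) = ((S1 : ℚ) + (S2 : ℚ)) := by
    rw [show ((S1 : ℚ) + (S2 : ℚ)) = ((S1 + S2 : ℤ) : ℚ) by push_cast; ring, ← hsum]
    push_cast
    rfl
  have hkeyQ : 2 * (S1 : ℚ) = (n : ℚ) * ((a : ℚ) * N) * ((a : ℚ) * N - 1) := by
    exact_mod_cast congrArg (fun x : ℤ => (x : ℚ)) hkey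
  have hS2lbQ : (0 : ℚ) ≤ (S2 : ℚ) := by exact_mod_cast hS2lb
  have hS2ubQ : (S2 : ℚ) ≤ ((a : ℚ) * N) * ((a : ℚ) * b) := by exact_mod_cast hS2ub
  constructor
  · rw [hgs, one_div, inv_mul_eq_div, le_div_iff₀ hQpos]
    nlinarith [hkeyQ, hS2lbQ]
  · rw [hgs, one_div, inv_mul_eq_div, div_le_iff₀ hQpos]
    nlinarith [hkeyQ, hS2ubQ]
end
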